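/- arXiv:2101.06178 — 3 statements merged into one kernel-verified Lean document; each statement's English description precedes it below -/
import Mathlib

section
/- Let n ∈ ℕ, M an n×n symmetric real matrix with zero diagonal, θ ∈ ℝⁿ, and let X ∼ I_{(M,θ)}. Then for every pair of distinct vertices v ≠ u in [n] and every x ∈ {−1,1}ⁿ, |P[X_v = 1 | X_u = 1, X_{−{v,u}} = x_{−{v,u}}] − P[X_v = 1 | X_u = −1, X_{−{v,u}} = x_{−{v,u}}]| ≤ tanh(|M_{v,u}|) ≤ |M_{v,u}|. -/
open Finset Real
open scoped Classical

noncomputable section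

/-- The real spin value (`±1`) of a Boolean configuration entry. -/
def spin (s : Bool) : ℝ := if s then 1 else -1

/-- The unnormalized Ising weight `exp(θ·x + ½ x·Mx)` of a configuration. -/
def isingWt {n : ℕ} (M : Matrix (Fin n) (Fin n) ℝ) (θ : Fin n → ℝ) (σ : Fin n → Bool) : ℝ :=
  Real.exp ((∑ i, θ i * spin (σ i)) + (1 / 2) * ∑ i, ∑ j, spin (σ i) * M i j * spin (σ j))

/-- The Ising probability of a single configuration. -/
def isingProb {n : ℕ} (M : Matrix (Fin n) (Fin n) ℝ) (θ : Fin n → ℝ) (σ : Fin n → Bool) : ℝ :=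
  isingWt M θ σ / ∑ τ : Fin n → Bool, isingWt M θ τ

/-- The Ising probability of an event `A`. -/
def isingPr {n : ℕ} (M : Matrix (Fin n) (Fin n) ℝ) (θ : Fin n → ℝ)
    (A : (Fin n → Bool) → Prop) : ℝ :=
  ∑ σ ∈ Finset.univ.filter (fun σ => A σ), isingProb M θ σ

/-- The Ising conditional probability `P[A | B]`. -/
def isingCond {n : ℕ} (M : Matrix (Fin n) (Fin n) ℝ) (θ : Fin n → ℝ)
    (A B : (Fin n → Bool) → Prop) : ℝ :=
  isingPr M θ (fun σ => A σ ∧ B σ) / isingPr M θ B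


lemma my_sinh_nonneg {y : ℝ} (hy : 0 ≤ y) : 0 ≤ Real.sinh y := by
  rw [← Real.sinh_zero]; exact Real.sinh_le_sinh.2 hy

lemma exp_ratio (P Q : ℝ) : exp P / (exp P + exp Q) = (1 + Real.tanh ((P - Q)/2)) / 2 := by
  have hP : Real.exp P = Real.exp ((P-Q)/2) * Real.exp ((P+Q)/2) := by
    rw [← Real.exp_add]; ring_nf
  have hQ : Real.exp Q = Real.exp (-((P-Q)/2)) * Real.exp ((P+Q)/2) := by
    rw [← Real.exp_add]; ring_nf
  rw [hP, hQ, Real.tanh_eq_sinh_div_cosh, Real.sinh_eq, Real.cosh_eq]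
  have h1 := Real.exp_pos ((P-Q)/2)
  have h2 := Real.exp_pos (-((P-Q)/2))
  have h3 := Real.exp_pos ((P+Q)/2)
  have h4 : Real.exp ((P-Q)/2) + Real.exp (-((P-Q)/2)) > 0 := by positivity
  field_simp
  ring

lemma tanh_le_self {m : ℝ} (hm : 0 ≤ m) : Real.tanh m ≤ m := by
  have hd : ∀ y : ℝ, HasDerivAt (fun y : ℝ => y * Real.cosh y - Real.sinh y)
      (y * Real.sinh y) y := by
    intro y
    have h := ((hasDerivAt_id y).mul (Real.hasDerivAt_cosh y)).sub (Real.hasDerivAt_sinh y)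
    exact h.congr_deriv (by simp only [id_eq]; ring)
  have key : Real.sinh m ≤ m * Real.cosh m := by
    have hmono : MonotoneOn (fun y : ℝ => y * Real.cosh y - Real.sinh y) (Set.Ici 0) := by
      apply monotoneOn_of_deriv_nonneg (convex_Ici 0)
      · exact (Continuous.sub (continuous_id.mul Real.continuous_cosh)
          Real.continuous_sinh).continuousOn
      · intro y _
        exact (hd y).differentiableAt.differentiableWithinAt
      · intro y hy
        rw [(hd y).deriv]
        rw [interior_Ici] at hy
        exact mul_nonneg (le_of_lt hy) (my_sinh_nonneg (le_of_lt hy))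
    have := hmono (Set.mem_Ici.2 le_rfl) (Set.mem_Ici.2 hm) hm
    simpa using this
  rw [Real.tanh_eq_sinh_div_cosh, div_le_iff₀ (Real.cosh_pos m)]
  exact key

lemma tanh_diff_core (a m : ℝ) (hm : 0 ≤ m) :
    |Real.tanh (a + m) - Real.tanh (a - m)| ≤ 2 * Real.tanh m := by
  have hca := Real.cosh_pos (a + m)
  have hcb := Real.cosh_pos (a - m)
  have hcm := Real.cosh_pos m
  have hD : Real.cosh m ^ 2 ≤ Real.cosh (a+m) * Real.cosh (a-m) := by
    rw [Real.cosh_add, Real.cosh_sub]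
    have h1 : Real.cosh a ^2 - Real.sinh a ^2 = 1 := Real.cosh_sq_sub_sinh_sq a
    have h2 : Real.cosh m ^2 - Real.sinh m ^2 = 1 := Real.cosh_sq_sub_sinh_sq m
    nlinarith [sq_nonneg (Real.sinh a)]
  have hdiff : Real.tanh (a + m) - Real.tanh (a - m)
      = Real.sinh (2*m) / (Real.cosh (a+m) * Real.cosh (a-m)) := by
    rw [Real.tanh_eq_sinh_div_cosh, Real.tanh_eq_sinh_div_cosh,
      div_sub_div _ _ (ne_of_gt hca) (ne_of_gt hcb)]
    congr 1
    rw [← Real.sinh_sub]; ring_nf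
  have hs : 0 ≤ Real.sinh (2*m) := my_sinh_nonneg (by linarith)
  rw [hdiff, abs_of_nonneg (div_nonneg hs (by positivity))]
  calc Real.sinh (2*m) / (Real.cosh (a+m) * Real.cosh (a-m))
      ≤ Real.sinh (2*m) / (Real.cosh m ^2) := by
        apply div_le_div_of_nonneg_left hs (by positivity) hD
    _ = 2 * Real.tanh m := by
        rw [Real.sinh_two_mul, Real.tanh_eq_sinh_div_cosh]
        field_simp [sq]

lemma tanh_diff (a m : ℝ) : |Real.tanh (a+m) - Real.tanh (a-m)| ≤ 2 * Real.tanh |m| := by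
  rcases le_total 0 m with h | h
  · rw [abs_of_nonneg h]; exact tanh_diff_core a m h
  · have hc := tanh_diff_core a (-m) (by linarith)
    rw [abs_of_nonpos h]
    rw [show a + -m = a - m by ring, show a - -m = a + m by ring, abs_sub_comm] at hc
    exact hc
/-- the configuration with value `s` at `v`, `t` at `u`, and `x` elsewhere -/
def cfg {n : ℕ} (v u : Fin n) (x : Fin n → Bool) (s t : Bool) : Fin n → Bool :=
  fun w => if w = v then s else if w = u then t else x w

variable {n : ℕ} (v u : Fin n) (x : Fin n → Bool)

lemma cfg_v (hvu : v ≠ u) (s t : Bool) : cfg v u x s t v = s := by simp [cfg]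

lemma cfg_u (hvu : v ≠ u) (s t : Bool) : cfg v u x s t u = t := by
  simp [cfg, (Ne.symm hvu : u ≠ v)]

lemma cfg_w (hvu : v ≠ u) (s t : Bool) {w : Fin n} (h1 : w ≠ v) (h2 : w ≠ u) :
    cfg v u x s t w = x w := by simp [cfg, h1, h2]

lemma mem_iff_cfg (hvu : v ≠ u) (s t : Bool) (σ : Fin n → Bool) :
    (σ v = s ∧ σ u = t ∧ ∀ w, w ≠ v → w ≠ u → σ w = x w) ↔ σ = cfg v u x s t := by
  constructor
  · rintro ⟨h1, h2, h3⟩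
    funext w
    by_cases hw : w = v
    · rw [hw, cfg_v v u x hvu]; exact hw ▸ h1
    by_cases hw' : w = u
    · rw [hw', cfg_u v u x hvu]; exact hw' ▸ h2
    · rw [h3 w hw hw', cfg_w v u x hvu s t hw hw']
  · rintro rfl
    exact ⟨cfg_v v u x hvu s t, cfg_u v u x hvu s t, fun w h1 h2 => cfg_w v u x hvu s t h1 h2⟩


lemma sum_filter_unique {α : Type*} [Fintype α] (P : α → Prop) [DecidablePred P]
    (f : α → ℝ) (a : α) (h : ∀ b, P b ↔ b = a) :
    ∑ σ ∈ Finset.univ.filter P, f σ = f a := by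
  have : Finset.univ.filter P = {a} := by
    ext b; simp [h b]
  rw [this, Finset.sum_singleton]

lemma sum_filter_pair' {α : Type*} [Fintype α] (P : α → Prop) [DecidablePred P]
    (f : α → ℝ) (a a' : α) (hne : a ≠ a') (h : ∀ b, P b ↔ b = a ∨ b = a') :
    ∑ σ ∈ Finset.univ.filter P, f σ = f a + f a' := by
  have : Finset.univ.filter P = {a, a'} := by
    ext b; simp [h b]
  rw [this, Finset.sum_pair hne]

lemma filter_singleton (hvu : v ≠ u) (t : Bool) :
    Finset.univ.filter (fun σ : Fin n → Bool =>
        σ v = true ∧ (σ u = t ∧ ∀ w, w ≠ v → w ≠ u → σ w = x w)) = {cfg v u x true t} := by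
  ext σ
  simp only [Finset.mem_filter, Finset.mem_univ, true_and, Finset.mem_singleton]
  exact mem_iff_cfg v u x hvu true t σ

lemma filter_pair (hvu : v ≠ u) (t : Bool) :
    Finset.univ.filter (fun σ : Fin n → Bool =>
        σ u = t ∧ ∀ w, w ≠ v → w ≠ u → σ w = x w)
      = {cfg v u x true t, cfg v u x false t} := by
  ext σ
  simp only [Finset.mem_filter, Finset.mem_univ, true_and, Finset.mem_insert,
    Finset.mem_singleton]
  constructor
  · rintro ⟨h2, h3⟩
    rcases Bool.eq_false_or_eq_true (σ v) with h1 | h1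
    · exact Or.inl ((mem_iff_cfg v u x hvu true t σ).1 ⟨h1, h2, h3⟩)
    · exact Or.inr ((mem_iff_cfg v u x hvu false t σ).1 ⟨h1, h2, h3⟩)
  · rintro (rfl | rfl)
    · exact ((mem_iff_cfg v u x hvu true t _).2 rfl).2
    · exact ((mem_iff_cfg v u x hvu false t _).2 rfl).2

lemma cfg_ne (hvu : v ≠ u) (t : Bool) : cfg v u x true t ≠ cfg v u x false t := by
  intro h
  have := congrFun h v
  rw [cfg_v v u x hvu, cfg_v v u x hvu] at this
  exact Bool.noConfusion this

lemma cond_eval {M : Matrix (Fin n) (Fin n) ℝ} {θ : Fin n → ℝ} (hvu : v ≠ u) (t : Bool) :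
    isingCond M θ (fun σ => σ v = true)
        (fun σ => σ u = t ∧ ∀ w, w ≠ v → w ≠ u → σ w = x w)
      = isingWt M θ (cfg v u x true t)
        / (isingWt M θ (cfg v u x true t) + isingWt M θ (cfg v u x false t)) := by
  have hZ : (0:ℝ) < ∑ τ : Fin n → Bool, isingWt M θ τ := by
    apply Finset.sum_pos (fun τ _ => Real.exp_pos _)
    exact ⟨fun _ => true, Finset.mem_univ _⟩
  have h1 : isingPr M θ (fun σ => σ v = true ∧
      (σ u = t ∧ ∀ w, w ≠ v → w ≠ u → σ w = x w))
      = isingWt M θ (cfg v u x true t) / ∑ τ : Fin n → Bool, isingWt M θ τ := by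
    rw [isingPr]
    rw [Finset.filter_congr_decidable]
    exact sum_filter_unique _ _ _ (fun σ => mem_iff_cfg v u x hvu true t σ)
  have h2 : isingPr M θ (fun σ => σ u = t ∧ ∀ w, w ≠ v → w ≠ u → σ w = x w)
      = (isingWt M θ (cfg v u x true t) + isingWt M θ (cfg v u x false t))
        / ∑ τ : Fin n → Bool, isingWt M θ τ := by
    rw [isingPr]
    rw [Finset.filter_congr_decidable]
    refine (sum_filter_pair' _ _ _ _ (cfg_ne v u x hvu t) ?_).trans ?_
    · intro σ
      constructor
      · rintro ⟨h2, h3⟩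
        rcases Bool.eq_false_or_eq_true (σ v) with h1 | h1
        · exact Or.inl ((mem_iff_cfg v u x hvu true t σ).1 ⟨h1, h2, h3⟩)
        · exact Or.inr ((mem_iff_cfg v u x hvu false t σ).1 ⟨h1, h2, h3⟩)
      · rintro (rfl | rfl)
        · exact ((mem_iff_cfg v u x hvu true t _).2 rfl).2
        · exact ((mem_iff_cfg v u x hvu false t _).2 rfl).2
    · rw [isingProb, isingProb, ← add_div]
  rw [isingCond, h1, h2]
  have hw1 := Real.exp_pos ((∑ i, θ i * spin (cfg v u x true t i)) + (1 / 2) *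
    ∑ i, ∑ j, spin (cfg v u x true t i) * M i j * spin (cfg v u x true t j))
  have hw0 := Real.exp_pos ((∑ i, θ i * spin (cfg v u x false t i)) + (1 / 2) *
    ∑ i, ∑ j, spin (cfg v u x false t i) * M i j * spin (cfg v u x false t j))
  have hsum : (0:ℝ) < isingWt M θ (cfg v u x true t) + isingWt M θ (cfg v u x false t) := by
    have := Real.exp_pos ((∑ i, θ i * spin (cfg v u x true t i)) + (1 / 2) *
      ∑ i, ∑ j, spin (cfg v u x true t i) * M i j * spin (cfg v u x true t j))
    unfold isingWt
    positivity
  field_simp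

lemma exponent_diff (M : Matrix (Fin n) (Fin n) ℝ) (θ : Fin n → ℝ) (hsymm : M.IsSymm)
    (hdiag : ∀ i, M i i = 0) (hvu : v ≠ u) (t : Bool) :
    ((∑ i, θ i * spin (cfg v u x true t i)) +
        (1/2) * ∑ i, ∑ j, spin (cfg v u x true t i) * M i j * spin (cfg v u x true t j))
      - ((∑ i, θ i * spin (cfg v u x false t i)) +
        (1/2) * ∑ i, ∑ j, spin (cfg v u x false t i) * M i j * spin (cfg v u x false t j))
    = 2 * (θ v + (M v u * spin t +
        ∑ j ∈ (Finset.univ.erase v).erase u, M v j * spin (x j))) := by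
  set q : Fin n → ℝ := fun j => spin (cfg v u x false t j) with hq
  have hp : ∀ j, spin (cfg v u x true t j) = q j + (if j = v then 2 else 0) := by
    intro j
    by_cases h : j = v
    · norm_num [hq, cfg, spin, h]
    · simp [hq, cfg, spin, h]
  have hqu : q u = spin t := by simp [hq, cfg, (Ne.symm hvu : u ≠ v)]
  have hlin : ∑ i, θ i * spin (cfg v u x true t i) = (∑ i, θ i * q i) + 2 * θ v := by
    simp_rw [hp, mul_add]
    rw [Finset.sum_add_distrib]
    congr 1
    rw [Finset.sum_eq_single v]
    · simp [mul_comm]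
    · intro i _ hne; simp [hne]
    · simp
  have expand : ∀ i j, spin (cfg v u x true t i) * M i j * spin (cfg v u x true t j)
      = q i * M i j * q j + ((if i = v then 2 * (M i j * q j) else 0)
        + ((if j = v then q i * M i j * 2 else 0)
        + (if i = v then (if j = v then 4 * M i j else 0) else 0))) := by
    intro i j
    rw [hp i, hp j]
    by_cases h1 : i = v <;> by_cases h2 : j = v <;> simp [h1, h2] <;> ring
  have hT1 : ∑ i : Fin n, ∑ j : Fin n, (if i = v then 2 * (M i j * q j) else 0)
      = 2 * ∑ j, M v j * q j := by
    rw [Finset.sum_eq_single v]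
    · simp [Finset.mul_sum]
    · intro i _ hne; simp [hne]
    · simp
  have hT2 : ∑ i : Fin n, ∑ j : Fin n, (if j = v then q i * M i j * 2 else 0)
      = 2 * ∑ j, M v j * q j := by
    have inner : ∀ i, ∑ j : Fin n, (if j = v then q i * M i j * 2 else 0)
        = q i * M i v * 2 := by
      intro i
      rw [Finset.sum_eq_single v]
      · simp
      · intro j _ hne; simp [hne]
      · simp
    simp_rw [inner]
    rw [Finset.mul_sum]
    apply Finset.sum_congr rfl
    intro i _
    rw [hsymm.apply v i]
    ring
  have hT3 : ∑ i : Fin n, ∑ j : Fin n,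
      (if i = v then (if j = v then 4 * M i j else 0) else 0) = 4 * M v v := by
    rw [Finset.sum_eq_single v]
    · rw [Finset.sum_eq_single v]
      · simp
      · intro j _ hne; simp [hne]
      · simp
    · intro i _ hne; simp [hne]
    · simp
  have hquad : ∑ i, ∑ j, spin (cfg v u x true t i) * M i j * spin (cfg v u x true t j)
      = (∑ i, ∑ j, q i * M i j * q j) + 4 * (∑ j, M v j * q j) + 4 * M v v := by
    simp_rw [expand, Finset.sum_add_distrib]
    rw [hT1, hT2, hT3]
    ring
  have hS : (∑ j, M v j * q j) = M v u * spin t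
      + ∑ j ∈ (Finset.univ.erase v).erase u, M v j * spin (x j) := by
    rw [← Finset.sum_erase_add Finset.univ _ (Finset.mem_univ v)]
    have hu : u ∈ Finset.univ.erase v := Finset.mem_erase.2 ⟨Ne.symm hvu, Finset.mem_univ u⟩
    rw [← Finset.sum_erase_add _ _ hu]
    have h0 : M v v * q v = 0 := by rw [hdiag]; ring
    rw [h0, hqu, add_zero]
    rw [add_comm]
    congr 1
    apply Finset.sum_congr rfl
    intro j hj
    rcases Finset.mem_erase.1 hj with ⟨hju, hj'⟩
    rcases Finset.mem_erase.1 hj' with ⟨hjv, _⟩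
    rw [hq]
    simp [cfg, hjv, hju]
  rw [hlin, hquad, hS, hdiag]
  ring

/-- For an Ising model `I_{(M,θ)}` with symmetric zero-diagonal `M`, for any
distinct vertices `v ≠ u` and any boundary configuration `x`, the influence of `u` on `v` is at
most `tanh |M v u|`, which in turn is at most `|M v u|`. -/
theorem stmt0 {n : ℕ} (M : Matrix (Fin n) (Fin n) ℝ) (θ : Fin n → ℝ)
    (hsymm : M.IsSymm) (hdiag : ∀ i, M i i = 0)
    (v u : Fin n) (hvu : v ≠ u) (x : Fin n → Bool) :
    |isingCond M θ (fun σ => σ v = true)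
        (fun σ => σ u = true ∧ ∀ w, w ≠ v → w ≠ u → σ w = x w) -
      isingCond M θ (fun σ => σ v = true)
        (fun σ => σ u = false ∧ ∀ w, w ≠ v → w ≠ u → σ w = x w)| ≤ Real.tanh |M v u| ∧
    Real.tanh |M v u| ≤ |M v u| := by
  constructor
  · rw [cond_eval v u x hvu true, cond_eval v u x hvu false]
    simp only [isingWt]
    rw [exp_ratio, exp_ratio]
    rw [exponent_diff v u x M θ hsymm hdiag hvu true,
      exponent_diff v u x M θ hsymm hdiag hvu false]
    set c := ∑ j ∈ (Finset.univ.erase v).erase u, M v j * spin (x j) with hc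
    have harg1 : 2 * (θ v + (M v u * spin true + c)) / 2 = (θ v + c) + M v u := by
      simp [spin]; ring
    have harg2 : 2 * (θ v + (M v u * spin false + c)) / 2 = (θ v + c) - M v u := by
      simp [spin]; ring
    rw [harg1, harg2]
    have key : (1 + Real.tanh ((θ v + c) + M v u)) / 2 - (1 + Real.tanh ((θ v + c) - M v u)) / 2
        = (Real.tanh ((θ v + c) + M v u) - Real.tanh ((θ v + c) - M v u)) / 2 := by ring
    rw [key, abs_div, abs_two, div_le_iff₀ (by norm_num : (0:ℝ) < 2)]
    rw [mul_comm]
    exact tanh_diff (θ v + c) (M v u)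
  · exact tanh_le_self (abs_nonneg _)
end
end

section
/- Let b > 0 and d, n positive integers with bd < 1. Let θ ∈ ℝⁿ and M an n×n symmetric matrix with M_{i,i} = 0 for all i, |M_{i,j}| ≤ b for all i, j, and each row of M having at most d nonzero entries. Let S ⊆ [n], x ∈ {−1,1}ⁿ, and v, u ∉ S. Let N be the n×n matrix with N_{i,j} = |M_{i,j}| if i, j ∉ S and N_{i,j} = 0 otherwise. Then for X ∼ I_{(M,θ)}, |P[X_v = 1 | X_S = x_S, X_u = 1] − P[X_v = 1 | X_S = x_S, X_u = −1]| ≤ Σ_{k=0}^∞ (N^k)_{v,u}, where N⁰ is the identity matrix (the series converges since all row sums of N are at most bd < 1). -/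
open Finset Real
open scoped Classical

noncomputable section

namespace IsingAux

section Green


variable {n : ℕ}

/-- Kernel `|M|` with rows and columns in `R` killed. -/
def Km (M : Matrix (Fin n) (Fin n) ℝ) (R : Finset (Fin n)) : Matrix (Fin n) (Fin n) ℝ :=
  fun i j => if i ∈ R ∨ j ∈ R then 0 else |M i j|

/-- Source vector towards target `t`, killed on `R ∪ {t}`. -/
def cv (M : Matrix (Fin n) (Fin n) ℝ) (R : Finset (Fin n)) (t : Fin n) : Fin n → ℝ :=
  fun i => if i ∈ R ∨ i = t then 0 else |M i t|

/-- First-passage Green function: total weight of walks from `x` to `t` avoiding `R`,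
with `t` hit only at the end. -/
def Gr (M : Matrix (Fin n) (Fin n) ℝ) (R : Finset (Fin n)) (t : Fin n) : Fin n → ℝ :=
  fun x => (if x = t then 1 else 0)
    + ∑' k : ℕ, ((Km M (insert t R)) ^ k).mulVec (cv M R t) x

variable {M : Matrix (Fin n) (Fin n) ℝ} {r : ℝ}

lemma Km_nonneg (R : Finset (Fin n)) (i j : Fin n) : 0 ≤ Km M R i j := by
  unfold Km; split <;> [rfl; exact abs_nonneg _]

lemma Km_rowsum_le (hrow : ∀ i, ∑ j, |M i j| ≤ r) (R : Finset (Fin n)) (i : Fin n) :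
    ∑ j, Km M R i j ≤ r := by
  refine le_trans (Finset.sum_le_sum (fun j _ => ?_)) (hrow i)
  unfold Km; split <;> [exact abs_nonneg _; rfl]

lemma cv_nonneg (R : Finset (Fin n)) (t : Fin n) (i : Fin n) : 0 ≤ cv M R t i := by
  unfold cv; split <;> [rfl; exact abs_nonneg _]

lemma cv_le (hrow : ∀ i, ∑ j, |M i j| ≤ r) (R : Finset (Fin n)) (t : Fin n) (i : Fin n) :
    cv M R t i ≤ r := by
  have h1 : |M i t| ≤ ∑ j, |M i j| :=
    Finset.single_le_sum (f := fun j => |M i j|) (fun j _ => abs_nonneg _) (mem_univ t)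
  have h0 : (0:ℝ) ≤ r := le_trans (Finset.sum_nonneg fun j _ => abs_nonneg _) (hrow i)
  unfold cv; split
  · exact h0
  · exact le_trans h1 (hrow i)

lemma iter_nonneg (R : Finset (Fin n)) (t : Fin n) (k : ℕ) (x : Fin n) :
    0 ≤ ((Km M (insert t R)) ^ k).mulVec (cv M R t) x := by
  induction k generalizing x with
  | zero => simpa [Matrix.one_mulVec] using cv_nonneg R t x
  | succ k ih =>
    rw [pow_succ', ← Matrix.mulVec_mulVec]
    simp only [Matrix.mulVec, dotProduct]
    exact Finset.sum_nonneg fun j _ => mul_nonneg (Km_nonneg _ _ _) (ih j)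

lemma iter_le (hrow : ∀ i, ∑ j, |M i j| ≤ r) (R : Finset (Fin n)) (t : Fin n) (k : ℕ)
    (x : Fin n) :
    ((Km M (insert t R)) ^ k).mulVec (cv M R t) x ≤ r ^ k * r := by
  induction k generalizing x with
  | zero => simpa [Matrix.one_mulVec] using cv_le hrow R t x
  | succ k ih =>
    have h0 : (0:ℝ) ≤ r := by
      by_cases hn : 0 < n
      · exact le_trans (Finset.sum_nonneg fun j _ => abs_nonneg _) (hrow ⟨0, hn⟩)
      · -- n = 0 : vacuous `x : Fin n`
        exact absurd (x.2) (by omega)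
    rw [pow_succ', ← Matrix.mulVec_mulVec]
    simp only [Matrix.mulVec, dotProduct]
    calc ∑ j, Km M (insert t R) x j * ((Km M (insert t R)) ^ k).mulVec (cv M R t) j
        ≤ ∑ j, Km M (insert t R) x j * (r ^ k * r) := by
          refine Finset.sum_le_sum fun j _ => ?_
          exact mul_le_mul_of_nonneg_left (ih j) (Km_nonneg _ _ _)
      _ = (∑ j, Km M (insert t R) x j) * (r ^ k * r) := by rw [Finset.sum_mul]
      _ ≤ r * (r ^ k * r) := by
          refine mul_le_mul_of_nonneg_right (Km_rowsum_le hrow _ x) ?_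
          positivity
      _ = r ^ (k+1) * r := by ring

lemma iter_summable (hrow : ∀ i, ∑ j, |M i j| ≤ r) (hr0 : 0 ≤ r) (hr : r < 1)
    (R : Finset (Fin n)) (t : Fin n) (x : Fin n) :
    Summable (fun k : ℕ => ((Km M (insert t R)) ^ k).mulVec (cv M R t) x) :=
  Summable.of_nonneg_of_le (fun k => iter_nonneg R t k x) (fun k => iter_le hrow R t k x)
    ((summable_geometric_of_lt_one hr0 hr).mul_right r)


lemma iter_zero_mem (R : Finset (Fin n)) (t : Fin n) {j : Fin n} (hj : j ∈ insert t R)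
    (k : ℕ) : ((Km M (insert t R)) ^ k).mulVec (cv M R t) j = 0 := by
  cases k with
  | zero =>
    simp only [pow_zero, Matrix.one_mulVec]
    unfold cv
    rcases Finset.mem_insert.1 hj with h | h
    · simp [h]
    · simp [h]
  | succ k =>
    rw [pow_succ', ← Matrix.mulVec_mulVec]
    simp only [Matrix.mulVec, dotProduct]
    refine Finset.sum_eq_zero fun i _ => ?_
    have : Km M (insert t R) j i = 0 := by unfold Km; simp [hj]
    simp only [this, zero_mul]

lemma Gr_self (R : Finset (Fin n)) (t : Fin n) : Gr M R t t = 1 := by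
  unfold Gr
  rw [if_pos rfl]
  have : ∀ k : ℕ, ((Km M (insert t R)) ^ k).mulVec (cv M R t) t = 0 :=
    fun k => iter_zero_mem R t (Finset.mem_insert_self t R) k
  simp [this]

lemma Gr_mem (R : Finset (Fin n)) (t : Fin n) {x : Fin n} (hx : x ∈ R) (hxt : x ≠ t) :
    Gr M R t x = 0 := by
  unfold Gr
  rw [if_neg hxt]
  have : ∀ k : ℕ, ((Km M (insert t R)) ^ k).mulVec (cv M R t) x = 0 :=
    fun k => iter_zero_mem R t (Finset.mem_insert_of_mem hx) k
  simp [this]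

lemma Gr_nonneg (R : Finset (Fin n)) (t : Fin n) (x : Fin n) : 0 ≤ Gr M R t x := by
  unfold Gr
  have h1 : (0:ℝ) ≤ (if x = t then 1 else 0) := by split <;> norm_num
  exact add_nonneg h1 (tsum_nonneg fun k => iter_nonneg R t k x)

/-- The harmonic equation for `Gr` off `R ∪ {t}`. -/
lemma Gr_rec (hrow : ∀ i, ∑ j, |M i j| ≤ r) (hr0 : 0 ≤ r) (hr : r < 1)
    (R : Finset (Fin n)) (t : Fin n) {x : Fin n} (hxR : x ∉ R) (hxt : x ≠ t) :
    Gr M R t x = ∑ j, |M x j| * Gr M R t j := by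
  have hsum : ∀ j, Summable (fun k : ℕ => ((Km M (insert t R)) ^ k).mulVec (cv M R t) j) :=
    fun j => iter_summable hrow hr0 hr R t j
  have htGmem : ∀ j ∈ insert t R,
      (∑' k : ℕ, ((Km M (insert t R)) ^ k).mulVec (cv M R t) j) = 0 := by
    intro j hj
    have : ∀ k : ℕ, ((Km M (insert t R)) ^ k).mulVec (cv M R t) j = 0 :=
      fun k => iter_zero_mem R t hj k
    simp [this]
  have hstep : (∑' k : ℕ, ((Km M (insert t R)) ^ k).mulVec (cv M R t) x)
      = cv M R t x + ∑ j, Km M (insert t R) x j *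
        (∑' k : ℕ, ((Km M (insert t R)) ^ k).mulVec (cv M R t) j) := by
    rw [Summable.tsum_eq_zero_add (hsum x)]
    congr 1
    · simp [Matrix.one_mulVec]
    have h1 : ∀ k : ℕ, ((Km M (insert t R)) ^ (k+1)).mulVec (cv M R t) x
        = ∑ j, Km M (insert t R) x j * ((Km M (insert t R)) ^ k).mulVec (cv M R t) j := by
      intro k
      rw [pow_succ', ← Matrix.mulVec_mulVec]
      simp [Matrix.mulVec, dotProduct]
    rw [tsum_congr h1, Summable.tsum_finsetSum (fun j _ => (hsum j).mul_left (Km M (insert t R) x j))]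
    exact Finset.sum_congr rfl fun j _ => ((hsum j).tsum_mul_left (Km M (insert t R) x j))
  have hGx : Gr M R t x
      = ∑' k : ℕ, ((Km M (insert t R)) ^ k).mulVec (cv M R t) x := by
    unfold Gr; rw [if_neg hxt, zero_add]
  have hterm : ∀ j, |M x j| * Gr M R t j
      = Km M (insert t R) x j * (∑' k : ℕ, ((Km M (insert t R)) ^ k).mulVec (cv M R t) j)
        + (if j = t then |M x t| else 0) := by
    intro j
    by_cases hjt : j = t
    · subst hjt
      rw [Gr_self, htGmem j (Finset.mem_insert_self _ _)]
      simp
    · by_cases hjR : j ∈ R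
      · rw [Gr_mem R t hjR hjt, htGmem j (Finset.mem_insert_of_mem hjR)]
        simp [hjt]
      · have hKxj : Km M (insert t R) x j = |M x j| := by
          unfold Km
          rw [if_neg]
          push_neg
          constructor <;> simp [hxt, hxR, hjt, hjR]
        have hGj : Gr M R t j
            = ∑' k : ℕ, ((Km M (insert t R)) ^ k).mulVec (cv M R t) j := by
          unfold Gr; rw [if_neg hjt, zero_add]
        rw [hGj, hKxj, if_neg hjt, add_zero]
  rw [hGx, hstep]
  rw [Finset.sum_congr rfl (fun j _ => hterm j), Finset.sum_add_distrib]
  have h2 : (∑ j, if j = t then |M x t| else 0) = |M x t| := by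
    rw [Finset.sum_ite_eq' univ t (fun _ => |M x t|)]; simp
  rw [h2]
  have hcx : cv M R t x = |M x t| := by
    unfold cv; rw [if_neg (by push_neg; exact ⟨hxR, hxt⟩)]
  rw [hcx]; ring

/-- Uniqueness / maximum principle: a harmonic function vanishing on `A` vanishes. -/
lemma harmonic_zero (hrow : ∀ i, ∑ j, |M i j| ≤ r) (hr : r < 1) (hn : 0 < n)
    (A : Finset (Fin n)) (e : Fin n → ℝ) (h0 : ∀ x ∈ A, e x = 0)
    (hrec : ∀ x, x ∉ A → e x = ∑ j, |M x j| * e j) : ∀ x, e x = 0 := by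
  obtain ⟨x₀, -, hx₀⟩ := Finset.exists_max_image Finset.univ (fun x => |e x|)
    ⟨⟨0, hn⟩, Finset.mem_univ _⟩
  have hmax : ∀ x, |e x| ≤ |e x₀| := fun x => hx₀ x (Finset.mem_univ x)
  by_cases hz : |e x₀| = 0
  · intro x
    have := le_trans (hmax x) (le_of_eq hz)
    exact abs_eq_zero.1 (le_antisymm this (abs_nonneg _))
  · exfalso
    have hpos : 0 < |e x₀| := lt_of_le_of_ne (abs_nonneg _) (Ne.symm hz)
    have hx₀A : x₀ ∉ A := by
      intro h; rw [h0 x₀ h] at hpos; simp at hpos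
    have : |e x₀| ≤ r * |e x₀| := by
      calc |e x₀| = |∑ j, |M x₀ j| * e j| := by rw [hrec x₀ hx₀A]
        _ ≤ ∑ j, |(|M x₀ j| * e j)| := Finset.abs_sum_le_sum_abs _ _
        _ = ∑ j, |M x₀ j| * |e j| := by
            refine Finset.sum_congr rfl fun j _ => ?_
            rw [abs_mul, abs_abs]
        _ ≤ ∑ j, |M x₀ j| * |e x₀| := by
            exact Finset.sum_le_sum fun j _ => mul_le_mul_of_nonneg_left (hmax j) (abs_nonneg _)
        _ = (∑ j, |M x₀ j|) * |e x₀| := by rw [Finset.sum_mul]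
        _ ≤ r * |e x₀| := mul_le_mul_of_nonneg_right (hrow x₀) (le_of_lt hpos)
    nlinarith

lemma Gr_le_one (hrow : ∀ i, ∑ j, |M i j| ≤ r) (hr0 : 0 ≤ r) (hr : r < 1) (hn : 0 < n)
    (R : Finset (Fin n)) (t : Fin n) (x : Fin n) : Gr M R t x ≤ 1 := by
  by_contra hx
  push_neg at hx
  obtain ⟨x₀, -, hx₀⟩ := Finset.exists_max_image Finset.univ (fun x => Gr M R t x)
    ⟨⟨0, hn⟩, Finset.mem_univ _⟩
  have hmax : ∀ y, Gr M R t y ≤ Gr M R t x₀ := fun y => hx₀ y (Finset.mem_univ y)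
  have hx₀1 : 1 < Gr M R t x₀ := lt_of_lt_of_le hx (hmax x)
  have hx₀t : x₀ ≠ t := by
    intro h; rw [h, Gr_self] at hx₀1; exact lt_irrefl _ hx₀1
  have hx₀R : x₀ ∉ R := by
    intro h; rw [Gr_mem R t h hx₀t] at hx₀1; linarith
  have := Gr_rec hrow hr0 hr R t hx₀R hx₀t
  have hle : Gr M R t x₀ ≤ r * Gr M R t x₀ := by
    calc Gr M R t x₀ = ∑ j, |M x₀ j| * Gr M R t j := this
      _ ≤ ∑ j, |M x₀ j| * Gr M R t x₀ :=
          Finset.sum_le_sum fun j _ => mul_le_mul_of_nonneg_left (hmax j) (abs_nonneg _)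
      _ = (∑ j, |M x₀ j|) * Gr M R t x₀ := by rw [Finset.sum_mul]
      _ ≤ r * Gr M R t x₀ :=
          mul_le_mul_of_nonneg_right (hrow x₀) (by linarith)
  nlinarith

lemma Gr_le_r (hrow : ∀ i, ∑ j, |M i j| ≤ r) (hr0 : 0 ≤ r) (hr : r < 1) (hn : 0 < n)
    (R : Finset (Fin n)) (t : Fin n) {x : Fin n} (hxR : x ∉ R) (hxt : x ≠ t) :
    Gr M R t x ≤ r := by
  calc Gr M R t x = ∑ j, |M x j| * Gr M R t j := Gr_rec hrow hr0 hr R t hxR hxt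
    _ ≤ ∑ j, |M x j| * 1 :=
        Finset.sum_le_sum fun j _ => mul_le_mul_of_nonneg_left
          (Gr_le_one hrow hr0 hr hn R t j) (abs_nonneg _)
    _ = ∑ j, |M x j| := by simp
    _ ≤ r := hrow x

lemma Gr_lower (hrow : ∀ i, ∑ j, |M i j| ≤ r) (hr0 : 0 ≤ r) (hr : r < 1)
    (R : Finset (Fin n)) (t : Fin n) {x : Fin n} (hxR : x ∉ R) (hxt : x ≠ t) :
    |M x t| ≤ Gr M R t x := by
  unfold Gr
  rw [if_neg hxt]
  have h0 : cv M R t x = |M x t| := by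
    unfold cv; rw [if_neg (by push_neg; exact ⟨hxR, hxt⟩)]
  calc |M x t| = ((Km M (insert t R)) ^ 0).mulVec (cv M R t) x := by
        simp [Matrix.one_mulVec, h0]
    _ ≤ ∑' k : ℕ, ((Km M (insert t R)) ^ k).mulVec (cv M R t) x :=
        Summable.le_tsum (iter_summable hrow hr0 hr R t x) 0 (fun k _ => iter_nonneg R t k x)
    _ ≤ 0 + ∑' k : ℕ, ((Km M (insert t R)) ^ k).mulVec (cv M R t) x := by linarith

/-- The first-passage decomposition identity. -/
lemma Gr_star (hrow : ∀ i, ∑ j, |M i j| ≤ r) (hr0 : 0 ≤ r) (hr : r < 1) (hn : 0 < n)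
    (T : Finset (Fin n)) {u w : Fin n} (hu : u ∉ T) (hw : w ∉ T) (huw : u ≠ w) (x : Fin n) :
    Gr M T u x = Gr M (insert w T) u x + Gr M (insert u T) w x * Gr M T u w := by
  set e : Fin n → ℝ := fun x =>
    Gr M T u x - Gr M (insert w T) u x - Gr M (insert u T) w x * Gr M T u w with he
  have h0 : ∀ x ∈ insert u (insert w T), e x = 0 := by
    intro x hx
    rcases Finset.mem_insert.1 hx with h | hx
    · have h1 : Gr M (insert w T) u x = 1 := by rw [h]; exact Gr_self _ _
      have h2 : Gr M (insert u T) w x = 0 := by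
        rw [h]; exact Gr_mem _ _ (Finset.mem_insert_self _ _) huw
      have h3 : Gr M T u x = 1 := by rw [h]; exact Gr_self _ _
      simp [he, h1, h2, h3]
    · rcases Finset.mem_insert.1 hx with h | hx
      · have h1 : Gr M (insert w T) u x = 0 := by
          rw [h]; exact Gr_mem _ _ (Finset.mem_insert_self _ _) (Ne.symm huw)
        have h2 : Gr M (insert u T) w x = 1 := by rw [h]; exact Gr_self _ _
        have h3 : Gr M T u x = Gr M T u w := by rw [h]
        simp only [he, h1, h2, h3, one_mul]
        ring
      · have hxu : x ≠ u := by intro hh; rw [hh] at hx; exact hu hx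
        have hxw : x ≠ w := by intro hh; rw [hh] at hx; exact hw hx
        have h1 : Gr M T u x = 0 := Gr_mem _ _ hx hxu
        have h2 : Gr M (insert w T) u x = 0 :=
          Gr_mem _ _ (Finset.mem_insert_of_mem hx) hxu
        have h3 : Gr M (insert u T) w x = 0 :=
          Gr_mem _ _ (Finset.mem_insert_of_mem hx) hxw
        simp [he, h1, h2, h3]
  have hrec : ∀ x, x ∉ insert u (insert w T) → e x = ∑ j, |M x j| * e j := by
    intro x hx
    simp only [Finset.mem_insert] at hx
    push_neg at hx
    obtain ⟨hxu, hxw, hxT⟩ := hx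
    have e1 : Gr M T u x = ∑ j, |M x j| * Gr M T u j := Gr_rec hrow hr0 hr T u hxT hxu
    have e2 : Gr M (insert w T) u x = ∑ j, |M x j| * Gr M (insert w T) u j :=
      Gr_rec hrow hr0 hr (insert w T) u (by simp [hxw, hxT]) hxu
    have e3 : Gr M (insert u T) w x = ∑ j, |M x j| * Gr M (insert u T) w j :=
      Gr_rec hrow hr0 hr (insert u T) w (by simp [hxu, hxT]) hxw
    simp only [he]
    rw [e1, e2, e3, Finset.sum_mul, ← Finset.sum_sub_distrib, ← Finset.sum_sub_distrib]
    exact Finset.sum_congr rfl fun j _ => by ring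
  have := harmonic_zero hrow hr hn (insert u (insert w T)) e h0 hrec x
  simp only [he] at this
  linarith


end Green

variable {n : ℕ} (M : Matrix (Fin n) (Fin n) ℝ) (θ : Fin n → ℝ)

/-- Sum of Ising weights over an event. -/
def SW (A : (Fin n → Bool) → Prop) : ℝ :=
  ∑ σ ∈ Finset.univ.filter A, isingWt M θ σ

lemma SW_pos {A : (Fin n → Bool) → Prop} (h : ∃ σ, A σ) : 0 < SW M θ A := by
  obtain ⟨σ, hσ⟩ := h
  exact Finset.sum_pos (fun τ _ => Real.exp_pos _) ⟨σ, by simp [hσ]⟩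

lemma SW_nonneg (A : (Fin n → Bool) → Prop) : 0 ≤ SW M θ A :=
  Finset.sum_nonneg fun τ _ => (Real.exp_pos _).le

lemma SW_congr {A B : (Fin n → Bool) → Prop} (h : ∀ σ, A σ ↔ B σ) : SW M θ A = SW M θ B := by
  unfold SW
  rw [Finset.filter_congr (fun σ _ => h σ)]

lemma SW_mono {A B : (Fin n → Bool) → Prop} (h : ∀ σ, A σ → B σ) : SW M θ A ≤ SW M θ B := by
  unfold SW
  refine Finset.sum_le_sum_of_subset_of_nonneg ?_ (fun τ _ _ => (Real.exp_pos _).le)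
  intro σ hσ
  simp only [Finset.mem_filter] at *
  exact ⟨hσ.1, h σ hσ.2⟩

lemma SW_split (A : (Fin n → Bool) → Prop) (w : Fin n) :
    SW M θ A = SW M θ (fun σ => A σ ∧ σ w = true) + SW M θ (fun σ => A σ ∧ σ w = false) := by
  unfold SW
  have key := Finset.sum_filter_add_sum_filter_not (Finset.univ.filter (fun σ => A σ))
    (fun σ => σ w = true) (isingWt M θ)
  rw [Finset.filter_filter, Finset.filter_filter] at key
  rw [← key]
  congr 1
  · apply Finset.sum_congr ?_ (fun _ _ => rfl)
    ext σ
    simp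
  · apply Finset.sum_congr ?_ (fun _ _ => rfl)
    ext σ
    simp [Bool.not_eq_true]

/-- The pinning condition. -/
def Cnd (T : Finset (Fin n)) (y : Fin n → Bool) (σ : Fin n → Bool) : Prop :=
  ∀ i ∈ T, σ i = y i

/-- Conditional probability of `σ v = true` given the pinning of `T` and `σ u = ε`. -/
def Fp (T : Finset (Fin n)) (y : Fin n → Bool) (u : Fin n) (ε : Bool) (v : Fin n) : ℝ :=
  SW M θ (fun σ => Cnd T y σ ∧ σ u = ε ∧ σ v = true) /
    SW M θ (fun σ => Cnd T y σ ∧ σ u = ε)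

/-- Influence of `u` on `v` given the pinning of `T`. -/
def Dd (T : Finset (Fin n)) (y : Fin n → Bool) (u v : Fin n) : ℝ :=
  Fp M θ T y u true v - Fp M θ T y u false v

lemma Cnd_witness1 (T : Finset (Fin n)) (y : Fin n → Bool) {u : Fin n} (hu : u ∉ T) (ε : Bool) :
    ∃ σ, Cnd T y σ ∧ σ u = ε :=
  ⟨Function.update y u ε,
    fun i hi => Function.update_of_ne (fun h : i = u => hu (h ▸ hi)) _ _,
    Function.update_self _ _ _⟩

lemma Cnd_witness2 (T : Finset (Fin n)) (y : Fin n → Bool) {u w : Fin n} (hu : u ∉ T)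
    (hw : w ∉ T) (huw : u ≠ w) (ε s : Bool) :
    ∃ σ, Cnd T y σ ∧ σ u = ε ∧ σ w = s := by
  refine ⟨Function.update (Function.update y u ε) w s, ?_, ?_, ?_⟩
  · intro i hi
    rw [Function.update_of_ne (fun h : i = w => hw (h ▸ hi)),
      Function.update_of_ne (fun h : i = u => hu (h ▸ hi))]
  · rw [Function.update_of_ne huw, Function.update_self]
  · rw [Function.update_self]

lemma den_pos (T : Finset (Fin n)) (y : Fin n → Bool) {u : Fin n} (hu : u ∉ T) (ε : Bool) :
    0 < SW M θ (fun σ => Cnd T y σ ∧ σ u = ε) :=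
  SW_pos M θ (Cnd_witness1 T y hu ε)

lemma Fp_nonneg (T : Finset (Fin n)) (y : Fin n → Bool) (u : Fin n) (ε : Bool) (v : Fin n) :
    0 ≤ Fp M θ T y u ε v :=
  div_nonneg (SW_nonneg M θ _) (SW_nonneg M θ _)

lemma Fp_le_one (T : Finset (Fin n)) (y : Fin n → Bool) (u : Fin n) (ε : Bool) (v : Fin n) :
    Fp M θ T y u ε v ≤ 1 := by
  unfold Fp
  rcases le_or_gt (SW M θ (fun σ => Cnd T y σ ∧ σ u = ε)) 0 with h | h
  · have h0 : SW M θ (fun σ => Cnd T y σ ∧ σ u = ε) = 0 :=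
      le_antisymm h (SW_nonneg M θ _)
    rw [h0, div_zero]; norm_num
  · rw [div_le_one h]
    exact SW_mono M θ (fun σ hσ => ⟨hσ.1, hσ.2.1⟩)

/-- Pinning an extra coordinate, in terms of `Cnd`. -/
lemma Cnd_insert {T : Finset (Fin n)} {y : Fin n → Bool} {w : Fin n} (hw : w ∉ T) (s : Bool)
    (σ : Fin n → Bool) :
    Cnd (insert w T) (Function.update y w s) σ ↔ Cnd T y σ ∧ σ w = s := by
  constructor
  · intro h
    refine ⟨fun i hi => ?_, ?_⟩
    · have := h i (Finset.mem_insert_of_mem hi)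
      rwa [Function.update_of_ne (fun hh : i = w => hw (hh ▸ hi))] at this
    · have := h w (Finset.mem_insert_self _ _)
      rwa [Function.update_self] at this
  · rintro ⟨h1, h2⟩ i hi
    rcases Finset.mem_insert.1 hi with h | h
    · rw [h, Function.update_self]; rw [← h] at h2 ⊢; exact h2
    · rw [Function.update_of_ne (fun hh : i = w => hw (hh ▸ h))]
      exact h1 i h

/-- Symmetry of a double pinning. -/
lemma Fp_swap (T : Finset (Fin n)) (y : Fin n → Bool) {a b : Fin n} (sa sb : Bool) (v : Fin n)
    (ha : a ∉ T) (hb : b ∉ T) (hab : a ≠ b) :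
    Fp M θ (insert a T) (Function.update y a sa) b sb v
      = Fp M θ (insert b T) (Function.update y b sb) a sa v := by
  unfold Fp
  congr 1
  · apply SW_congr
    intro σ
    rw [Cnd_insert ha, Cnd_insert hb]
    tauto
  · apply SW_congr
    intro σ
    rw [Cnd_insert ha, Cnd_insert hb]
    tauto

/-- The sigmoid function. -/
def sg (t : ℝ) : ℝ := (1 + Real.exp (-t))⁻¹

lemma sg_hasDeriv (x : ℝ) :
    HasDerivAt sg (Real.exp (-x) / (1 + Real.exp (-x))^2) x := by
  have h1 : HasDerivAt (fun t : ℝ => -t) (-1) x := (hasDerivAt_id x).neg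
  have h2 : HasDerivAt (fun t : ℝ => Real.exp (-t)) (Real.exp (-x) * (-1)) x :=
    (Real.hasDerivAt_exp (-x)).comp x h1
  have h3 : HasDerivAt (fun t : ℝ => 1 + Real.exp (-t)) (Real.exp (-x) * (-1)) x :=
    h2.const_add 1
  have hne : (1 + Real.exp (-x)) ≠ 0 := by positivity
  have h4 := h3.inv hne
  exact h4.congr_deriv (by ring)

lemma sg_diff_le (a c : ℝ) : |sg a - sg c| ≤ |a - c| / 4 := by
  have hdiff : ∀ x : ℝ, DifferentiableAt ℝ sg x := fun x => (sg_hasDeriv x).differentiableAt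
  have hder : ∀ x : ℝ, ‖deriv sg x‖ ≤ 1/4 := by
    intro x
    rw [(sg_hasDeriv x).deriv, Real.norm_eq_abs, abs_of_nonneg (by positivity),
      div_le_div_iff₀ (by positivity) (by norm_num)]
    nlinarith [sq_nonneg (1 - Real.exp (-x)), Real.exp_pos (-x)]
  have key := Convex.norm_image_sub_le_of_norm_deriv_le (s := Set.univ) (f := sg)
    (fun x _ => hdiff x) (fun x _ => hder x) convex_univ (Set.mem_univ c) (Set.mem_univ a)
  rw [Real.norm_eq_abs, Real.norm_eq_abs] at key
  linarith

lemma ratio_eq_sg {p q : ℝ} (hp : 0 < p) (hq : 0 < q) :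
    p / (p + q) = sg (Real.log (p / q)) := by
  unfold sg
  have h1 : Real.exp (-Real.log (p/q)) = q / p := by
    rw [← Real.log_inv, Real.exp_log (by positivity), inv_div]
  rw [h1]
  rw [eq_comm, inv_eq_iff_eq_inv]
  rw [inv_div]
  field_simp

lemma isingCond_SW (A B : (Fin n → Bool) → Prop) :
    isingCond M θ A B = SW M θ (fun σ => A σ ∧ B σ) / SW M θ B := by
  have hZ : (0:ℝ) < ∑ τ : Fin n → Bool, isingWt M θ τ :=
    Finset.sum_pos (fun τ _ => Real.exp_pos _) ⟨fun _ => true, Finset.mem_univ _⟩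
  unfold isingCond isingPr isingProb
  unfold SW
  rw [← Finset.sum_div, ← Finset.sum_div, div_div_div_comm, div_self hZ.ne', div_one]

lemma isingWt_pos (σ : Fin n → Bool) : 0 < isingWt M θ σ := Real.exp_pos _

lemma quad_decomp (hsymm : M.IsSymm) (hdiag : ∀ i, M i i = 0) (σ : Fin n → Bool)
    (v : Fin n) (s : Bool) :
    (∑ i, ∑ j, spin (Function.update σ v s i) * M i j * spin (Function.update σ v s j))
      = 2 * spin s * (∑ j ∈ Finset.univ.erase v, M v j * spin (σ j))
        + ∑ i ∈ Finset.univ.erase v, ∑ j ∈ Finset.univ.erase v,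
            spin (σ i) * M i j * spin (σ j) := by
  set τ := Function.update σ v s with hτ
  have hτv : τ v = s := Function.update_self _ _ _
  have hτi : ∀ i, i ≠ v → τ i = σ i := fun i hi => Function.update_of_ne hi _ _
  have inner : ∀ i, (∑ j, spin (τ i) * M i j * spin (τ j))
      = spin (τ i) * M i v * spin s
        + ∑ j ∈ Finset.univ.erase v, spin (τ i) * M i j * spin (σ j) := by
    intro i
    rw [← Finset.add_sum_erase Finset.univ _ (Finset.mem_univ v)]
    congr 1
    · rw [hτv]
    · exact Finset.sum_congr rfl fun j hj => by rw [hτi j (Finset.ne_of_mem_erase hj)]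
  rw [← Finset.add_sum_erase Finset.univ
    (fun i => ∑ j, spin (τ i) * M i j * spin (τ j)) (Finset.mem_univ v)]
  have hrest : ∀ i ∈ Finset.univ.erase v, (∑ j, spin (τ i) * M i j * spin (τ j))
      = spin (σ i) * M i v * spin s
        + ∑ j ∈ Finset.univ.erase v, spin (σ i) * M i j * spin (σ j) := by
    intro i hi
    rw [inner i, hτi i (Finset.ne_of_mem_erase hi)]
  rw [Finset.sum_congr rfl hrest, Finset.sum_add_distrib, inner v, hτv, hdiag v]
  have hsym1 : (∑ i ∈ Finset.univ.erase v, spin (σ i) * M i v * spin s)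
      = spin s * ∑ j ∈ Finset.univ.erase v, M v j * spin (σ j) := by
    rw [Finset.mul_sum]
    exact Finset.sum_congr rfl fun i _ => by rw [hsymm.apply v i]; ring
  have hrow : (∑ j ∈ Finset.univ.erase v, spin s * M v j * spin (σ j))
      = spin s * ∑ j ∈ Finset.univ.erase v, M v j * spin (σ j) := by
    rw [Finset.mul_sum]
    exact Finset.sum_congr rfl fun j _ => by ring
  rw [hsym1, hrow]
  ring

lemma log_wt_ratio (hsymm : M.IsSymm) (hdiag : ∀ i, M i i = 0) (σ : Fin n → Bool) (v : Fin n) :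
    Real.log (isingWt M θ (Function.update σ v true) / isingWt M θ (Function.update σ v false))
      = 2 * θ v + 2 * ∑ j ∈ Finset.univ.erase v, M v j * spin (σ j) := by
  unfold isingWt
  rw [← Real.exp_sub, Real.log_exp]
  have hlin : ∀ s : Bool, (∑ i, θ i * spin (Function.update σ v s i))
      = θ v * spin s + ∑ i ∈ Finset.univ.erase v, θ i * spin (σ i) := by
    intro s
    rw [← Finset.add_sum_erase Finset.univ _ (Finset.mem_univ v)]
    congr 1
    · rw [Function.update_self]
    · exact Finset.sum_congr rfl fun i hi => by
        rw [Function.update_of_ne (Finset.ne_of_mem_erase hi)]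
  rw [hlin true, hlin false, quad_decomp M hsymm hdiag σ v true,
    quad_decomp M hsymm hdiag σ v false]
  simp [spin]
  ring

lemma base_case (hsymm : M.IsSymm) (hdiag : ∀ i, M i i = 0)
    (T : Finset (Fin n)) (y : Fin n → Bool) {u v : Fin n}
    (hu : u ∉ T) (hv : v ∉ T) (hvu : v ≠ u)
    (hfull : ∀ i, i ∉ T → i = u ∨ i = v) :
    |Dd M θ T y u v| ≤ |M v u| := by
  have huv : u ≠ v := fun h => hvu h.symm
  set base : Bool → (Fin n → Bool) := fun ε => Function.update y u ε with hbase
  set χ : Bool → Bool → (Fin n → Bool) := fun ε s => Function.update (base ε) v s with hχ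
  have hχT : ∀ ε s, Cnd T y (χ ε s) := by
    intro ε s i hi
    have hiu : i ≠ u := fun h => hu (h ▸ hi)
    have hiv : i ≠ v := fun h => hv (h ▸ hi)
    simp only [hχ, hbase]
    rw [Function.update_of_ne hiv, Function.update_of_ne hiu]
  have hχu : ∀ ε s, (χ ε s) u = ε := by
    intro ε s
    simp only [hχ, hbase]
    rw [Function.update_of_ne huv, Function.update_self]
  have hχv : ∀ ε s, (χ ε s) v = s := by
    intro ε s
    simp only [hχ]
    rw [Function.update_self]
  have hkey : ∀ (ε s : Bool) (σ : Fin n → Bool),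
      (Cnd T y σ ∧ σ u = ε ∧ σ v = s) ↔ σ = χ ε s := by
    intro ε s σ
    constructor
    · rintro ⟨h1, h2, h3⟩
      funext i
      by_cases hiv : i = v
      · rw [hiv, hχv]; exact h3
      · by_cases hiu : i = u
        · rw [hiu, hχu]; exact h2
        · have hiT : i ∈ T := by
            by_contra hiT
            rcases hfull i hiT with h | h
            exacts [hiu h, hiv h]
          rw [h1 i hiT, hχT ε s i hiT]
    · rintro rfl
      exact ⟨hχT ε s, hχu ε s, hχv ε s⟩
  have hSW : ∀ (ε s : Bool),
      SW M θ (fun σ => Cnd T y σ ∧ σ u = ε ∧ σ v = s) = isingWt M θ (χ ε s) := by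
    intro ε s
    unfold SW
    refine Finset.sum_eq_single_of_mem (χ ε s) ?_ ?_
    · simp only [Finset.mem_filter]
      exact ⟨Finset.mem_univ _, (hkey ε s _).2 rfl⟩
    · intro b hb hne
      simp only [Finset.mem_filter] at hb
      exact absurd ((hkey ε s b).1 hb.2) hne
  have hFp : ∀ ε : Bool, Fp M θ T y u ε v
      = sg (Real.log (isingWt M θ (χ ε true) / isingWt M θ (χ ε false))) := by
    intro ε
    unfold Fp
    have hden : SW M θ (fun σ => Cnd T y σ ∧ σ u = ε)
        = isingWt M θ (χ ε true) + isingWt M θ (χ ε false) := by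
      rw [SW_split M θ _ v]
      congr 1
      · rw [← hSW ε true]; apply SW_congr; intro σ; tauto
      · rw [← hSW ε false]; apply SW_congr; intro σ; tauto
    rw [hden, hSW ε true]
    exact ratio_eq_sg (isingWt_pos M θ _) (isingWt_pos M θ _)
  have hlog : ∀ ε : Bool, Real.log (isingWt M θ (χ ε true) / isingWt M θ (χ ε false))
      = 2 * θ v + 2 * ∑ j ∈ Finset.univ.erase v, M v j * spin (base ε j) :=
    fun ε => log_wt_ratio M θ hsymm hdiag (base ε) v
  have hdiffsum : (∑ j ∈ Finset.univ.erase v, M v j * spin (base true j))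
      - (∑ j ∈ Finset.univ.erase v, M v j * spin (base false j)) = 2 * M v u := by
    rw [← Finset.sum_sub_distrib]
    rw [Finset.sum_eq_single_of_mem u (Finset.mem_erase.2 ⟨huv, Finset.mem_univ u⟩)]
    · simp [hbase, spin]
      ring
    · intro j _ hju
      simp only [hbase]
      rw [Function.update_of_ne hju, Function.update_of_ne hju, sub_self]
  unfold Dd
  rw [hFp true, hFp false]
  calc |sg (Real.log (isingWt M θ (χ true true) / isingWt M θ (χ true false)))
        - sg (Real.log (isingWt M θ (χ false true) / isingWt M θ (χ false false)))|
      ≤ |Real.log (isingWt M θ (χ true true) / isingWt M θ (χ true false))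
        - Real.log (isingWt M θ (χ false true) / isingWt M θ (χ false false))| / 4 :=
        sg_diff_le _ _
    _ = |4 * M v u| / 4 := by
        rw [hlog true, hlog false]
        congr 1
        rw [show (2 * θ v + 2 * ∑ j ∈ Finset.univ.erase v, M v j * spin (base true j))
            - (2 * θ v + 2 * ∑ j ∈ Finset.univ.erase v, M v j * spin (base false j))
            = 2 * ((∑ j ∈ Finset.univ.erase v, M v j * spin (base true j))
              - (∑ j ∈ Finset.univ.erase v, M v j * spin (base false j))) by ring, hdiffsum]
        ring
    _ = |M v u| := by
        rw [abs_mul]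
        norm_num

/-- Law of total probability: conditioning on the spin at `w`. -/
lemma step_identity (T : Finset (Fin n)) (y : Fin n → Bool) (u v w : Fin n)
    (hu : u ∉ T) (hw : w ∉ T) (huw : u ≠ w) (ε : Bool) :
    Fp M θ T y u ε v =
      Fp M θ T y u ε w * Fp M θ (insert w T) (Function.update y w true) u ε v
      + (1 - Fp M θ T y u ε w) * Fp M θ (insert w T) (Function.update y w false) u ε v := by
  set Bq : Bool → ℝ := fun s => SW M θ (fun σ => Cnd T y σ ∧ σ u = ε ∧ σ w = s) with hBq
  set Aq : Bool → ℝ := fun s =>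
    SW M θ (fun σ => Cnd T y σ ∧ σ u = ε ∧ σ w = s ∧ σ v = true) with hAq
  have hBpos : ∀ s, 0 < Bq s := fun s => SW_pos M θ (Cnd_witness2 T y hu hw huw ε s)
  have hden : SW M θ (fun σ => Cnd T y σ ∧ σ u = ε) = Bq true + Bq false := by
    rw [SW_split M θ _ w]
    congr 1
    · simp only [hBq]; apply SW_congr; intro σ; tauto
    · simp only [hBq]; apply SW_congr; intro σ; tauto
  have hnum : SW M θ (fun σ => Cnd T y σ ∧ σ u = ε ∧ σ v = true) = Aq true + Aq false := by
    rw [SW_split M θ _ w]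
    congr 1
    · simp only [hAq]; apply SW_congr; intro σ; tauto
    · simp only [hAq]; apply SW_congr; intro σ; tauto
  have hFw : Fp M θ T y u ε w = Bq true / (Bq true + Bq false) := by
    unfold Fp
    rw [hden]
  have hFs : ∀ s : Bool, Fp M θ (insert w T) (Function.update y w s) u ε v = Aq s / Bq s := by
    intro s
    unfold Fp
    congr 1
    · simp only [hAq]
      apply SW_congr; intro σ; rw [Cnd_insert hw]; tauto
    · simp only [hBq]
      apply SW_congr; intro σ; rw [Cnd_insert hw]; tauto
  have hFv : Fp M θ T y u ε v = (Aq true + Aq false) / (Bq true + Bq false) := by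
    unfold Fp
    rw [hden, hnum]
  rw [hFv, hFw, hFs true, hFs false]
  have h1 : Bq true ≠ 0 := (hBpos true).ne'
  have h2 : Bq false ≠ 0 := (hBpos false).ne'
  have h3 : Bq true + Bq false ≠ 0 := ne_of_gt (add_pos (hBpos true) (hBpos false))
  field_simp
  ring

/-- The main inductive influence bound. -/
lemma main_bound {r : ℝ} (hsymm : M.IsSymm) (hdiag : ∀ i, M i i = 0)
    (hrow : ∀ i, ∑ j, |M i j| ≤ r) (hr0 : 0 ≤ r) (hr : r < 1) (hn : 0 < n) :
    ∀ m : ℕ, ∀ T : Finset (Fin n), (Finset.univ \ T).card ≤ m →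
      ∀ (y : Fin n → Bool) (u v : Fin n), u ∉ T → v ∉ T → v ≠ u →
      |Dd M θ T y u v| ≤ Gr M T u v := by
  intro m
  induction m with
  | zero =>
    intro T hT y u v hu hv hvu
    exfalso
    have : u ∈ Finset.univ \ T := Finset.mem_sdiff.2 ⟨Finset.mem_univ _, hu⟩
    have := Finset.card_pos.2 ⟨u, this⟩
    omega
  | succ m ih =>
    intro T hT y u v hu hv hvu
    by_cases hsmall : (Finset.univ \ T).card ≤ 2
    · -- base case: only `u` and `v` are free
      have hfull : ∀ i, i ∉ T → i = u ∨ i = v := by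
        intro i hi
        by_contra hcon
        push_neg at hcon
        obtain ⟨hiu, hiv⟩ := hcon
        have hsub : ({i, u, v} : Finset (Fin n)) ⊆ Finset.univ \ T := by
          intro a ha
          simp only [Finset.mem_insert, Finset.mem_singleton] at ha
          rcases ha with rfl | rfl | rfl <;>
            exact Finset.mem_sdiff.2 ⟨Finset.mem_univ _, by assumption⟩
        have hcard : ({i, u, v} : Finset (Fin n)).card = 3 := by
          rw [Finset.card_insert_of_notMem (by simp [hiu, hiv]),
            Finset.card_insert_of_notMem (by simp [Ne.symm hvu]), Finset.card_singleton]
        have := Finset.card_le_card hsub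
        omega
      exact le_trans (base_case M θ hsymm hdiag T y hu hv hvu hfull)
        (Gr_lower hrow hr0 hr T u hv hvu)
    · push_neg at hsmall
      -- extremal pair
      set P := (Finset.univ.filter (fun v' : Fin n => v' ∉ T ∧ v' ≠ u)) ×ˢ
        (Finset.univ : Finset (Fin n → Bool)) with hP
      have hvP : (v, y) ∈ P := by
        simp only [hP, Finset.mem_product, Finset.mem_filter]
        exact ⟨⟨Finset.mem_univ _, hv, hvu⟩, Finset.mem_univ _⟩
      obtain ⟨p, hpP, hpmax⟩ := Finset.exists_max_image P
        (fun p => |Dd M θ T p.2 u p.1| - Gr M T u p.1) ⟨(v, y), hvP⟩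
      have hp1 : p.1 ∉ T ∧ p.1 ≠ u := by
        have := hpP
        simp only [hP, Finset.mem_product, Finset.mem_filter] at this
        exact this.1.2
      set v' := p.1 with hv'
      set y' := p.2 with hy'
      set m₀ := |Dd M θ T y' u v'| - Gr M T u v' with hm₀
      suffices hs : m₀ ≤ 0 by
        have := hpmax (v, y) hvP
        simp only [← hv', ← hy', ← hm₀] at this
        linarith
      by_contra hm
      push_neg at hm
      -- find a third free site
      obtain ⟨w, hwmem, hwnot⟩ : ∃ w ∈ Finset.univ \ T, w ∉ ({u, v'} : Finset (Fin n)) := by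
        apply Finset.not_subset.1
        intro hsub
        have h1 := Finset.card_le_card hsub
        have h2 : ({u, v'} : Finset (Fin n)).card ≤ 2 :=
          le_trans (Finset.card_insert_le _ _) (by simp)
        omega
      have hwT : w ∉ T := (Finset.mem_sdiff.1 hwmem).2
      have hwu : w ≠ u := by intro h; exact hwnot (by simp [h])
      have hwv : w ≠ v' := by intro h; exact hwnot (by simp [h])
      have hv'T : v' ∉ T := hp1.1
      have hv'u : v' ≠ u := hp1.2
      have hcard1 : (Finset.univ \ insert w T).card ≤ m := by
        have he : Finset.univ \ insert w T = (Finset.univ \ T).erase w := by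
          ext a
          simp only [Finset.mem_sdiff, Finset.mem_erase, Finset.mem_insert, Finset.mem_univ,
            true_and]
          tauto
        rw [he, Finset.card_erase_of_mem hwmem]
        omega
      have hcard2 : (Finset.univ \ insert u T).card ≤ m := by
        have humem : u ∈ Finset.univ \ T := Finset.mem_sdiff.2 ⟨Finset.mem_univ _, hu⟩
        have he : Finset.univ \ insert u T = (Finset.univ \ T).erase u := by
          ext a
          simp only [Finset.mem_sdiff, Finset.mem_erase, Finset.mem_insert, Finset.mem_univ,
            true_and]
          tauto
        rw [he, Finset.card_erase_of_mem humem]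
        omega
      set q : Bool → ℝ := fun ε => Fp M θ T y' u ε w with hq
      set rr : Bool → Bool → ℝ :=
        fun s ε => Fp M θ (insert w T) (Function.update y' w s) u ε v' with hrr
      have hid : ∀ ε : Bool, Fp M θ T y' u ε v' = q ε * rr true ε + (1 - q ε) * rr false ε :=
        fun ε => step_identity M θ T y' u v' w hu hwT (Ne.symm hwu) ε
      have hDd : Dd M θ T y' u v'
          = q true * (rr true true - rr true false)
            + (1 - q true) * (rr false true - rr false false)
            + (q true - q false) * (rr true false - rr false false) := by
        unfold Dd
        rw [hid true, hid false]
        ring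
      have huwT : u ∉ insert w T := by
        simp only [Finset.mem_insert]
        push_neg
        exact ⟨fun h => hwu h.symm, hu⟩
      have hv'wT : v' ∉ insert w T := by
        simp only [Finset.mem_insert]
        push_neg
        exact ⟨fun h => hwv h.symm, hv'T⟩
      have hG1 : ∀ s : Bool, |rr s true - rr s false| ≤ Gr M (insert w T) u v' := by
        intro s
        have hh : rr s true - rr s false = Dd M θ (insert w T) (Function.update y' w s) u v' :=
          rfl
        rw [hh]
        exact ih (insert w T) hcard1 _ u v' huwT hv'wT hv'u
      have hwuT : w ∉ insert u T := by
        simp only [Finset.mem_insert]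
        push_neg
        exact ⟨hwu, hwT⟩
      have hv'uT : v' ∉ insert u T := by
        simp only [Finset.mem_insert]
        push_neg
        exact ⟨hv'u, hv'T⟩
      have hG2 : |rr true false - rr false false| ≤ Gr M (insert u T) w v' := by
        have hh : ∀ s : Bool, rr s false = Fp M θ (insert u T) (Function.update y' u false) w s v' :=
          fun s => Fp_swap M θ T y' s false v' hwT hu hwu
        have hh2 : rr true false - rr false false
            = Dd M θ (insert u T) (Function.update y' u false) w v' := by
          unfold Dd
          rw [hh true, hh false]
        rw [hh2]
        exact ih (insert u T) hcard2 _ w v' hwuT hv'uT (Ne.symm hwv)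
      have hq4 : |q true - q false| ≤ Gr M T u w + m₀ := by
        have hh : q true - q false = Dd M θ T y' u w := rfl
        have hwP : (w, y') ∈ P := by
          simp only [hP, Finset.mem_product, Finset.mem_filter]
          exact ⟨⟨Finset.mem_univ _, hwT, hwu⟩, Finset.mem_univ _⟩
        have := hpmax (w, y') hwP
        simp only [← hm₀] at this
        rw [hh]
        linarith
      have hq0 : 0 ≤ q true := Fp_nonneg M θ _ _ _ _ _
      have hq1 : q true ≤ 1 := Fp_le_one M θ _ _ _ _ _
      have hGt0 : 0 ≤ Gr M (insert w T) u v' := Gr_nonneg _ _ _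
      have hG20 : 0 ≤ Gr M (insert u T) w v' := Gr_nonneg _ _ _
      have hGTuw0 : 0 ≤ Gr M T u w := Gr_nonneg _ _ _
      have hbound : |Dd M θ T y' u v'|
          ≤ Gr M (insert w T) u v' + (Gr M T u w + m₀) * Gr M (insert u T) w v' := by
        rw [hDd]
        calc |q true * (rr true true - rr true false)
              + (1 - q true) * (rr false true - rr false false)
              + (q true - q false) * (rr true false - rr false false)|
            ≤ |q true * (rr true true - rr true false)
                + (1 - q true) * (rr false true - rr false false)|
              + |(q true - q false) * (rr true false - rr false false)| := abs_add_le _ _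
          _ ≤ |q true * (rr true true - rr true false)|
              + |(1 - q true) * (rr false true - rr false false)|
              + |(q true - q false) * (rr true false - rr false false)| := by
              linarith [abs_add_le (q true * (rr true true - rr true false))
                ((1 - q true) * (rr false true - rr false false))]
          _ = q true * |rr true true - rr true false|
              + (1 - q true) * |rr false true - rr false false|
              + |q true - q false| * |rr true false - rr false false| := by
              rw [abs_mul, abs_mul, abs_mul, abs_of_nonneg hq0,
                abs_of_nonneg (show (0:ℝ) ≤ 1 - q true by linarith)]
          _ ≤ q true * Gr M (insert w T) u v' + (1 - q true) * Gr M (insert w T) u v'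
              + (Gr M T u w + m₀) * Gr M (insert u T) w v' := by
              have b1 := mul_le_mul_of_nonneg_left (hG1 true) hq0
              have b2 := mul_le_mul_of_nonneg_left (hG1 false) (by linarith : (0:ℝ) ≤ 1 - q true)
              have b3 : |q true - q false| * |rr true false - rr false false|
                  ≤ (Gr M T u w + m₀) * Gr M (insert u T) w v' :=
                mul_le_mul hq4 hG2 (abs_nonneg _) (by linarith)
              linarith
          _ = Gr M (insert w T) u v' + (Gr M T u w + m₀) * Gr M (insert u T) w v' := by ring
      have hstar : Gr M T u v'
          = Gr M (insert w T) u v' + Gr M (insert u T) w v' * Gr M T u w :=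
        Gr_star hrow hr0 hr hn T hu hwT (Ne.symm hwu) v'
      have hG2r : Gr M (insert u T) w v' ≤ r :=
        Gr_le_r hrow hr0 hr hn (insert u T) w hv'uT (Ne.symm hwv)
      have hfin : m₀ ≤ m₀ * Gr M (insert u T) w v' := by
        have : |Dd M θ T y' u v'| - Gr M T u v'
            ≤ m₀ * Gr M (insert u T) w v' := by
          rw [hstar]
          nlinarith [hbound]
        simpa [← hm₀] using this
      nlinarith [hfin, hG2r, hG20, hm, hr]

section Final

variable {n : ℕ} {M N : Matrix (Fin n) (Fin n) ℝ} {r : ℝ}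

lemma Npow_nonneg (hN0 : ∀ i j, 0 ≤ N i j) : ∀ (k : ℕ) (i j : Fin n), 0 ≤ (N ^ k) i j := by
  intro k
  induction k with
  | zero =>
    intro i j
    rw [pow_zero, Matrix.one_apply]
    split <;> norm_num
  | succ k ihk =>
    intro i j
    rw [pow_succ', Matrix.mul_apply]
    exact Finset.sum_nonneg fun l _ => mul_nonneg (hN0 i l) (ihk l j)

lemma Npow_entry_le (hN0 : ∀ i j, 0 ≤ N i j) (hNrow : ∀ i, ∑ j, N i j ≤ r) (hr0 : 0 ≤ r) :
    ∀ (k : ℕ) (i j : Fin n), (N ^ k) i j ≤ r ^ k := by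
  intro k
  induction k with
  | zero =>
    intro i j
    rw [pow_zero, Matrix.one_apply]
    split <;> norm_num
  | succ k ihk =>
    intro i j
    rw [pow_succ', Matrix.mul_apply]
    calc ∑ l, N i l * (N ^ k) l j ≤ ∑ l, N i l * r ^ k :=
          Finset.sum_le_sum fun l _ => mul_le_mul_of_nonneg_left (ihk l j) (hN0 i l)
      _ = (∑ l, N i l) * r ^ k := by rw [Finset.sum_mul]
      _ ≤ r * r ^ k := mul_le_mul_of_nonneg_right (hNrow i) (by positivity)
      _ = r ^ (k + 1) := by ring

lemma Npow_summable (hN0 : ∀ i j, 0 ≤ N i j) (hNrow : ∀ i, ∑ j, N i j ≤ r) (hr0 : 0 ≤ r)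
    (hr : r < 1) (i j : Fin n) : Summable (fun k : ℕ => (N ^ k) i j) :=
  Summable.of_nonneg_of_le (fun k => Npow_nonneg hN0 k i j)
    (fun k => Npow_entry_le hN0 hNrow hr0 k i j) (summable_geometric_of_lt_one hr0 hr)

lemma Gr_le_tsumN {S : Finset (Fin n)} {u v : Fin n} (hrow : ∀ i, ∑ j, |M i j| ≤ r)
    (hr0 : 0 ≤ r) (hr : r < 1)
    (hu : u ∉ S) (hv : v ∉ S) (hvu : v ≠ u)
    (hN : ∀ i j, N i j = if i ∉ S ∧ j ∉ S then |M i j| else 0) :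
    Gr M S u v ≤ ∑' k : ℕ, (N ^ k) v u := by
  have hN0 : ∀ i j, 0 ≤ N i j := fun i j => by
    rw [hN]; split <;> [exact abs_nonneg _; exact le_refl 0]
  have hNle : ∀ i j, N i j ≤ |M i j| := fun i j => by
    rw [hN]; split <;> [exact le_refl _; exact abs_nonneg _]
  have hNrow : ∀ i, ∑ j, N i j ≤ r := fun i =>
    le_trans (Finset.sum_le_sum fun j _ => hNle i j) (hrow i)
  have key : ∀ (k : ℕ) (x : Fin n),
      ((Km M (insert u S)) ^ k).mulVec (cv M S u) x ≤ (N ^ (k + 1)) x u := by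
    intro k
    induction k with
    | zero =>
      intro x
      rw [pow_zero, Matrix.one_mulVec, pow_one]
      unfold cv
      split
      · exact hN0 x u
      · rename_i hcond
        push_neg at hcond
        rw [hN, if_pos ⟨hcond.1, hu⟩]
    | succ k ihk =>
      intro x
      rw [pow_succ', ← Matrix.mulVec_mulVec]
      simp only [Matrix.mulVec, dotProduct]
      have hKN : ∀ j, Km M (insert u S) x j ≤ N x j := by
        intro j
        unfold Km
        split
        · exact hN0 x j
        · rename_i hcond
          push_neg at hcond
          have hxS : x ∉ S := fun h => hcond.1 (Finset.mem_insert_of_mem h)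
          have hjS : j ∉ S := fun h => hcond.2 (Finset.mem_insert_of_mem h)
          rw [hN, if_pos ⟨hxS, hjS⟩]
      calc ∑ j, Km M (insert u S) x j * ((Km M (insert u S)) ^ k).mulVec (cv M S u) j
          ≤ ∑ j, N x j * (N ^ (k + 1)) j u := by
            refine Finset.sum_le_sum fun j _ => ?_
            exact mul_le_mul (hKN j) (ihk j) (iter_nonneg S u k j)
              (hN0 x j)
        _ = (N ^ (k + 2)) x u := by
            rw [pow_succ' N (k+1), Matrix.mul_apply]
    -- done
  have hsum1 : Summable (fun k : ℕ => ((Km M (insert u S)) ^ k).mulVec (cv M S u) v) :=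
    iter_summable hrow hr0 hr S u v
  have hsum2 : Summable (fun k : ℕ => (N ^ (k + 1)) v u) := by
    refine Summable.of_nonneg_of_le (fun k => Npow_nonneg hN0 (k+1) v u)
      (fun k => Npow_entry_le hN0 hNrow hr0 (k+1) v u) ?_
    exact ((summable_geometric_of_lt_one hr0 hr).mul_right r).congr (fun k => by ring)
  have h1 : (∑' k : ℕ, ((Km M (insert u S)) ^ k).mulVec (cv M S u) v)
      ≤ ∑' k : ℕ, (N ^ (k + 1)) v u := Summable.tsum_le_tsum (fun k => key k v) hsum1 hsum2
  have h2 : (∑' k : ℕ, (N ^ k) v u) = (N ^ 0) v u + ∑' k : ℕ, (N ^ (k + 1)) v u :=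
    Summable.tsum_eq_zero_add (Npow_summable hN0 hNrow hr0 hr v u)
  have h3 : (0:ℝ) ≤ (N ^ 0) v u := Npow_nonneg hN0 0 v u
  unfold Gr
  rw [if_neg hvu, zero_add]
  linarith

end Final
end IsingAux

/-- Correlation decay bound: the influence of `u` on `v` under conditioning on
a censored set `S` is bounded by `Σ_k (N^k)_{v,u}` where `N` is `|M|` restricted off `S`. -/
theorem stmt1 {n : ℕ} (b : ℝ) (d : ℕ) (hb : 0 < b) (hd : 0 < d) (hn : 0 < n)
    (hbd : b * d < 1)
    (M : Matrix (Fin n) (Fin n) ℝ) (θ : Fin n → ℝ)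
    (hsymm : M.IsSymm) (hdiag : ∀ i, M i i = 0)
    (hbound : ∀ i j, |M i j| ≤ b)
    (hsparse : ∀ i, (Finset.univ.filter (fun j => M i j ≠ 0)).card ≤ d)
    (S : Finset (Fin n)) (x : Fin n → Bool) (v u : Fin n)
    (hv : v ∉ S) (hu : u ∉ S)
    (N : Matrix (Fin n) (Fin n) ℝ)
    (hN : ∀ i j, N i j = if i ∉ S ∧ j ∉ S then |M i j| else 0) :
    |isingCond M θ (fun σ => σ v = true)
        (fun σ => (∀ w ∈ S, σ w = x w) ∧ σ u = true) -
      isingCond M θ (fun σ => σ v = true)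
        (fun σ => (∀ w ∈ S, σ w = x w) ∧ σ u = false)|
      ≤ ∑' k : ℕ, (N ^ k) v u := by
  have hrow : ∀ i, ∑ j, |M i j| ≤ b * (d : ℝ) := by
    intro i
    have h1 : (∑ j ∈ Finset.univ.filter (fun j => M i j ≠ 0), |M i j|) = ∑ j, |M i j| := by
      apply Finset.sum_filter_of_ne
      intro j _ hj hc
      exact hj (by rw [hc, abs_zero])
    rw [← h1]
    calc (∑ j ∈ Finset.univ.filter (fun j => M i j ≠ 0), |M i j|)
        ≤ (Finset.univ.filter (fun j => M i j ≠ 0)).card • b :=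
          Finset.sum_le_card_nsmul _ _ b (fun j _ => hbound i j)
      _ = ((Finset.univ.filter (fun j => M i j ≠ 0)).card : ℝ) * b := nsmul_eq_mul _ _
      _ ≤ (d : ℝ) * b := by
          apply mul_le_mul_of_nonneg_right _ hb.le
          exact_mod_cast hsparse i
      _ = b * (d : ℝ) := mul_comm _ _
  have hr0 : (0:ℝ) ≤ b * (d : ℝ) := by positivity
  have hN0 : ∀ i j, 0 ≤ N i j := fun i j => by
    rw [hN]; split <;> [exact abs_nonneg _; exact le_refl 0]
  have hNle : ∀ i j, N i j ≤ |M i j| := fun i j => by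
    rw [hN]; split <;> [exact le_refl _; exact abs_nonneg _]
  have hNrow : ∀ i, ∑ j, N i j ≤ b * (d : ℝ) := fun i =>
    le_trans (Finset.sum_le_sum fun j _ => hNle i j) (hrow i)
  have hL : ∀ ε : Bool, isingCond M θ (fun σ => σ v = true)
      (fun σ => (∀ w ∈ S, σ w = x w) ∧ σ u = ε) = IsingAux.Fp M θ S x u ε v := by
    intro ε
    rw [IsingAux.isingCond_SW]
    unfold IsingAux.Fp
    congr 1
    all_goals
      apply IsingAux.SW_congr
      intro σ
      unfold IsingAux.Cnd
      tauto
  rw [hL true, hL false]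
  by_cases hvu : v = u
  · subst hvu
    have hd1 : IsingAux.Fp M θ S x v true v = 1 := by
      unfold IsingAux.Fp
      rw [IsingAux.SW_congr M θ (fun σ : Fin n → Bool =>
        show (IsingAux.Cnd S x σ ∧ σ v = true ∧ σ v = true) ↔ (IsingAux.Cnd S x σ ∧ σ v = true) by tauto)]
      exact div_self (IsingAux.den_pos M θ S x hv true).ne'
    have hd2 : IsingAux.Fp M θ S x v false v = 0 := by
      unfold IsingAux.Fp
      have hz : IsingAux.SW M θ (fun σ => IsingAux.Cnd S x σ ∧ σ v = false ∧ σ v = true) = 0 := by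
        unfold IsingAux.SW
        apply Finset.sum_eq_zero
        intro σ hσ
        simp only [Finset.mem_filter] at hσ
        exact absurd (hσ.2.2.1.symm.trans hσ.2.2.2) (by simp)
      rw [hz, zero_div]
    rw [hd1, hd2]
    have hone : (1:ℝ) = (N ^ 0) v v := by rw [pow_zero, Matrix.one_apply_eq]
    have hts := Summable.le_tsum (IsingAux.Npow_summable hN0 hNrow hr0 hbd v v) 0
      (fun k _ => IsingAux.Npow_nonneg hN0 k v v)
    rw [← hone] at hts
    rw [show |(1:ℝ) - 0| = 1 by norm_num]
    exact hts
  · have hDd : IsingAux.Fp M θ S x u true v - IsingAux.Fp M θ S x u false v = IsingAux.Dd M θ S x u v := rfl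
    rw [hDd]
    calc |IsingAux.Dd M θ S x u v| ≤ IsingAux.Gr M S u v :=
          IsingAux.main_bound M θ hsymm hdiag hrow hr0 hbd hn
            ((Finset.univ \ S).card) S le_rfl x u v hu hv hvu
      _ ≤ ∑' k : ℕ, (N ^ k) v u := IsingAux.Gr_le_tsumN hrow hr0 hbd hu hv hvu hN
end
end

section
/- Let b > 0 and d, n positive integers with bd < 1. Let θ ∈ ℝⁿ and M an n×n symmetric matrix with M_{i,i} = 0 for all i, |M_{i,j}| ≤ b for all i, j, and each row of M having at most d nonzero entries. Let S ⊆ [n], v ∈ [n], x ∈ {−1,1}ⁿ, and let X ∼ I_{(M,θ)}. Then Σ_{u ∈ S, u ≠ v} |P[X_u = 1 | X_{S∖{v,u}} = x_{S∖{v,u}}, X_v = 1] − P[X_u = 1 | X_{S∖{v,u}} = x_{S∖{v,u}}, X_v = −1]| ≤ bd/(1 − bd). -/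
open Finset Real
open scoped Classical

noncomputable section

namespace Stmt2Aux

variable {n : ℕ} (M : Matrix (Fin n) (Fin n) ℝ) (θ : Fin n → ℝ)

lemma wt_pos (M : Matrix (Fin n) (Fin n) ℝ) (θ : Fin n → ℝ) (σ : Fin n → Bool) :
    0 < isingWt M θ σ := Real.exp_pos _

/-- the sigmoid is `1/4`-Lipschitz -/
lemma sig_lip (x y : ℝ) :
    |1 / (1 + Real.exp (-x)) - 1 / (1 + Real.exp (-y))| ≤ |x - y| / 4 := by
  have hderiv : ∀ z : ℝ, HasDerivAt (fun t : ℝ => 1 / (1 + Real.exp (-t)))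
      (Real.exp (-z) / (1 + Real.exp (-z)) ^ 2) z := by
    intro z
    have h1 : HasDerivAt (fun t : ℝ => 1 + Real.exp (-t)) (-Real.exp (-z)) z := by
      have := (Real.hasDerivAt_exp (-z)).comp z (hasDerivAt_neg z)
      simpa using (this.const_add 1)
    have hne : (1 + Real.exp (-z)) ≠ 0 := by positivity
    have h2 := h1.inv hne
    have : -(-Real.exp (-z)) / (1 + Real.exp (-z)) ^ 2 = Real.exp (-z) / (1 + Real.exp (-z)) ^ 2 := by ring
    rw [this] at h2
    simp only [one_div]; exact h2
  have hbound : ∀ z : ℝ, ‖Real.exp (-z) / (1 + Real.exp (-z)) ^ 2‖ ≤ 1 / 4 := by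
    intro z
    have h0 : (0:ℝ) < Real.exp (-z) := Real.exp_pos _
    have h2 : (0:ℝ) < (1 + Real.exp (-z)) ^ 2 := by positivity
    rw [Real.norm_eq_abs, abs_of_pos (by positivity)]
    rw [div_le_div_iff₀ h2 (by norm_num)]
    nlinarith [sq_nonneg (1 - Real.exp (-z))]
  have := Convex.norm_image_sub_le_of_norm_hasDerivWithin_le
    (f := fun t : ℝ => 1 / (1 + Real.exp (-t)))
    (f' := fun z => Real.exp (-z) / (1 + Real.exp (-z)) ^ 2)
    (fun z _ => (hderiv z).hasDerivWithinAt) (fun z _ => hbound z)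
    (convex_univ) (Set.mem_univ y) (Set.mem_univ x)
  rw [Real.norm_eq_abs, Real.norm_eq_abs] at this
  calc |1 / (1 + Real.exp (-x)) - 1 / (1 + Real.exp (-y))| ≤ 1/4 * |x - y| := this
    _ = |x - y| / 4 := by ring


/-- Log-odds of the heat-bath conditional at site `w`. -/
def Lfun (w : Fin n) (σ : Fin n → Bool) : ℝ :=
  2 * θ w + 2 * ∑ j, M w j * spin (σ j)

lemma wt_ratio (hsymm : M.IsSymm) (hdiag : ∀ i, M i i = 0) (w : Fin n) (σ : Fin n → Bool) :
    isingWt M θ (Function.update σ w true)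
      = Real.exp (Lfun M θ w σ) * isingWt M θ (Function.update σ w false) := by
  unfold isingWt
  rw [← Real.exp_add]
  congr 1
  have upd : ∀ (s : Bool) (i : Fin n),
      spin (Function.update σ w s i) = if i = w then spin s else spin (σ i) := by
    intro s i
    rw [Function.update_apply]
    split <;> rfl
  set a : Fin n → ℝ := fun i => spin (σ i) with ha
  have hlin : (∑ i, θ i * spin (Function.update σ w true i))
      - (∑ i, θ i * spin (Function.update σ w false i)) = 2 * θ w := by
    rw [← Finset.sum_sub_distrib]
    have : ∀ i, θ i * spin (Function.update σ w true i)
        - θ i * spin (Function.update σ w false i) = if i = w then 2 * θ i else 0 := by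
      intro i
      rw [upd, upd]
      by_cases hi : i = w <;> simp [hi, spin] <;> ring
    rw [Finset.sum_congr rfl fun i _ => this i, Finset.sum_ite_eq' Finset.univ w
      (fun i => 2 * θ i)]
    simp
  have hsymm' : ∀ i j, M i j = M j i := fun i j => (hsymm.apply j i)
  have hquad : (∑ i, ∑ j, spin (Function.update σ w true i) * M i j *
        spin (Function.update σ w true j))
      - (∑ i, ∑ j, spin (Function.update σ w false i) * M i j *
        spin (Function.update σ w false j))
      = 4 * ∑ j, M w j * a j := by
    rw [← Finset.sum_sub_distrib]
    have key : ∀ i, (∑ j, spin (Function.update σ w true i) * M i j *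
          spin (Function.update σ w true j))
        - (∑ j, spin (Function.update σ w false i) * M i j *
          spin (Function.update σ w false j))
        = if i = w then (2 * ∑ j, M w j * a j) else 2 * a i * M i w := by
      intro i
      rw [← Finset.sum_sub_distrib]
      by_cases hi : i = w
      · subst hi
        have : ∀ j, spin (Function.update σ i true i) * M i j * spin (Function.update σ i true j)
            - spin (Function.update σ i false i) * M i j * spin (Function.update σ i false j)
            = 2 * (M i j * a j) := by
          intro j
          rw [upd, upd, upd, upd]
          by_cases hj : j = i <;> simp [hj, spin, hdiag, ha] <;> split_ifs <;> ring
        rw [Finset.sum_congr rfl fun j _ => this j, if_pos rfl, ← Finset.mul_sum]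
      · have : ∀ j, spin (Function.update σ w true i) * M i j * spin (Function.update σ w true j)
            - spin (Function.update σ w false i) * M i j * spin (Function.update σ w false j)
            = if j = w then 2 * a i * M i j else 0 := by
          intro j
          rw [upd, upd, upd, upd]
          by_cases hj : j = w <;> simp [hj, hi, spin, ha] <;> split_ifs <;> ring
        rw [Finset.sum_congr rfl fun j _ => this j,
          Finset.sum_ite_eq' Finset.univ w (fun j => 2 * a i * M i j), if_neg hi]
        simp
    rw [Finset.sum_congr rfl fun i _ => key i]
    -- now ∑ i, (if i = w then 2*Σ else 2 a i M i w)
    rw [← Finset.add_sum_erase _ _ (Finset.mem_univ w), if_pos rfl]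
    have h1 : ∑ i ∈ Finset.univ.erase w,
        (if i = w then (2 * ∑ j, M w j * a j) else 2 * a i * M i w)
        = ∑ i ∈ Finset.univ.erase w, 2 * (M w i * a i) := by
      refine Finset.sum_congr rfl fun i hi => ?_
      rw [if_neg (Finset.ne_of_mem_erase hi), hsymm' i w]
      ring
    rw [h1, ← Finset.mul_sum]
    have h2 : ∑ i ∈ Finset.univ.erase w, M w i * a i = ∑ i, M w i * a i := by
      rw [← Finset.add_sum_erase _ (fun i => M w i * a i) (Finset.mem_univ w),
        hdiag w]
      ring
    rw [h2]
    ring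
  unfold Lfun
  linarith [hlin, hquad]

/-- Heat-bath conditional probability of `true` at site `w`. -/
def hb (w : Fin n) (σ : Fin n → Bool) : ℝ :=
  isingWt M θ (Function.update σ w true) /
    (isingWt M θ (Function.update σ w true) + isingWt M θ (Function.update σ w false))

lemma hb_nonneg (w : Fin n) (σ : Fin n → Bool) : 0 ≤ hb M θ w σ := by
  unfold hb
  have h1 := wt_pos M θ (Function.update σ w true)
  have h2 := wt_pos M θ (Function.update σ w false)
  positivity

lemma hb_le_one (w : Fin n) (σ : Fin n → Bool) : hb M θ w σ ≤ 1 := by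
  unfold hb
  have h1 := wt_pos M θ (Function.update σ w true)
  have h2 := wt_pos M θ (Function.update σ w false)
  rw [div_le_one (by linarith)]
  linarith

lemma hb_eq_sig (hsymm : M.IsSymm) (hdiag : ∀ i, M i i = 0) (w : Fin n) (σ : Fin n → Bool) :
    hb M θ w σ = 1 / (1 + Real.exp (-(Lfun M θ w σ))) := by
  unfold hb
  rw [wt_ratio M θ hsymm hdiag w σ]
  have h2 := wt_pos M θ (Function.update σ w false)
  have h3 := Real.exp_pos (Lfun M θ w σ)
  have h4 := Real.exp_pos (-(Lfun M θ w σ))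
  have h5 : Real.exp (-(Lfun M θ w σ)) * Real.exp (Lfun M θ w σ) = 1 := by
    rw [← Real.exp_add]; simp
  field_simp
  nlinarith [h2, h3, h5]

lemma Lfun_diff (w j : Fin n) (σ : Fin n → Bool) :
    Lfun M θ w (Function.update σ j true) - Lfun M θ w (Function.update σ j false)
      = 4 * M w j := by
  unfold Lfun
  have : ∀ (s : Bool) (i : Fin n),
      spin (Function.update σ j s i) = if i = j then spin s else spin (σ i) := by
    intro s i; rw [Function.update_apply]; split <;> rfl
  have h : (∑ k, M w k * spin (Function.update σ j true k))
      - (∑ k, M w k * spin (Function.update σ j false k)) = 2 * M w j := by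
    rw [← Finset.sum_sub_distrib]
    have h2 : ∀ k, M w k * spin (Function.update σ j true k)
        - M w k * spin (Function.update σ j false k) = if k = j then 2 * M w k else 0 := by
      intro k
      rw [this, this]
      by_cases hk : k = j <;> simp [hk, spin] <;> ring
    rw [Finset.sum_congr rfl fun k _ => h2 k,
      Finset.sum_ite_eq' Finset.univ j (fun k => 2 * M w k)]
    simp
  linarith

lemma hb_osc (hsymm : M.IsSymm) (hdiag : ∀ i, M i i = 0) (w j : Fin n) (σ : Fin n → Bool) :
    |hb M θ w (Function.update σ j true) - hb M θ w (Function.update σ j false)|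
      ≤ |M w j| := by
  rw [hb_eq_sig M θ hsymm hdiag, hb_eq_sig M θ hsymm hdiag]
  calc |1 / (1 + Real.exp (-(Lfun M θ w (Function.update σ j true))))
        - 1 / (1 + Real.exp (-(Lfun M θ w (Function.update σ j false))))|
      ≤ |Lfun M θ w (Function.update σ j true) - Lfun M θ w (Function.update σ j false)| / 4 :=
        sig_lip _ _
    _ = |M w j| := by rw [Lfun_diff]; rw [abs_mul]; rw [abs_of_nonneg (by norm_num : (0:ℝ) ≤ 4)]; ring

/-- The heat-bath resampling operator at site `w`. -/
def Tw (w : Fin n) (f : (Fin n → Bool) → ℝ) : (Fin n → Bool) → ℝ :=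
  fun σ => hb M θ w σ * f (Function.update σ w true)
    + (1 - hb M θ w σ) * f (Function.update σ w false)

/-- The averaged heat-bath operator over a finite set of sites. -/
def Aop (U : Finset (Fin n)) (f : (Fin n → Bool) → ℝ) : (Fin n → Bool) → ℝ :=
  fun σ => ((U.card : ℝ))⁻¹ * ∑ w ∈ U, Tw M θ w f σ

/-- `D` is a vector of oscillation bounds for `f`. -/
def OscBd (f : (Fin n → Bool) → ℝ) (D : Fin n → ℝ) : Prop :=
  ∀ (j : Fin n) (σ : Fin n → Bool),
    |f (Function.update σ j true) - f (Function.update σ j false)| ≤ D j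

lemma OscBd.nonneg {f : (Fin n → Bool) → ℝ} {D : Fin n → ℝ} (h : OscBd f D) (j : Fin n) :
    0 ≤ D j := le_trans (abs_nonneg _) (h j (fun _ => true))

lemma OscBd.pair {f : (Fin n → Bool) → ℝ} {D : Fin n → ℝ} (h : OscBd f D) (j : Fin n)
    (σ : Fin n → Bool) (r r' : Bool) :
    |f (Function.update σ j r) - f (Function.update σ j r')| ≤ D j := by
  cases r <;> cases r'
  · simpa using h.nonneg j
  · rw [abs_sub_comm]; exact h j σ
  · exact h j σ
  · simpa using h.nonneg j

lemma hb_update_self (w : Fin n) (σ : Fin n → Bool) (r : Bool) :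
    hb M θ w (Function.update σ w r) = hb M θ w σ := by
  unfold hb
  rw [Function.update_idem, Function.update_idem]

lemma Tw_update_self (w : Fin n) (f : (Fin n → Bool) → ℝ) (σ : Fin n → Bool) (r : Bool) :
    Tw M θ w f (Function.update σ w r) = Tw M θ w f σ := by
  unfold Tw
  rw [hb_update_self, Function.update_idem, Function.update_idem]

lemma osc_Tw {f : (Fin n → Bool) → ℝ} {D : Fin n → ℝ}
    (hsymm : M.IsSymm) (hdiag : ∀ i, M i i = 0) (h : OscBd f D) (w : Fin n) :
    OscBd (Tw M θ w f) (fun j => if j = w then 0 else D j + |M w j| * D w) := by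
  intro j σ
  by_cases hj : j = w
  · subst hj
    rw [Tw_update_self, Tw_update_self]
    simp
  · simp only [if_neg hj]
    have hcomm : ∀ (r s : Bool), Function.update (Function.update σ j r) w s
        = Function.update (Function.update σ w s) j r := fun r s =>
      Function.update_comm hj r s σ
    set p1 := hb M θ w (Function.update σ j true) with hp1
    set p0 := hb M θ w (Function.update σ j false) with hp0
    unfold Tw
    rw [hcomm true true, hcomm true false, hcomm false true, hcomm false false]
    set Att := f (Function.update (Function.update σ w true) j true)
    set Atf := f (Function.update (Function.update σ w false) j true)
    set Btt := f (Function.update (Function.update σ w true) j false)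
    set Btf := f (Function.update (Function.update σ w false) j false)
    have key : p1 * Att + (1 - p1) * Atf - (p0 * Btt + (1 - p0) * Btf)
        = p1 * (Att - Btt) + (1 - p1) * (Atf - Btf) + (p1 - p0) * (Btt - Btf) := by ring
    rw [key]
    have h1 : |Att - Btt| ≤ D j := h j (Function.update σ w true)
    have h2 : |Atf - Btf| ≤ D j := h j (Function.update σ w false)
    have h3 : |Btt - Btf| ≤ D w := by
      have := h.pair w (Function.update σ j false) true false
      rw [hcomm false true, hcomm false false] at this
      exact this
    have h4 : |p1 - p0| ≤ |M w j| := hb_osc M θ hsymm hdiag w j σ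
    have hp1a := hb_nonneg M θ w (Function.update σ j true)
    have hp1b := hb_le_one M θ w (Function.update σ j true)
    calc |p1 * (Att - Btt) + (1 - p1) * (Atf - Btf) + (p1 - p0) * (Btt - Btf)|
        ≤ |p1 * (Att - Btt) + (1 - p1) * (Atf - Btf)| + |(p1 - p0) * (Btt - Btf)| :=
          abs_add_le _ _
      _ ≤ (|p1 * (Att - Btt)| + |(1 - p1) * (Atf - Btf)|) + |(p1 - p0)| * |Btt - Btf| := by
          rw [abs_mul]; exact add_le_add (abs_add_le _ _) le_rfl
      _ ≤ (p1 * D j + (1 - p1) * D j) + |M w j| * D w := by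
          refine add_le_add (add_le_add ?_ ?_) ?_
          · rw [abs_mul, abs_of_nonneg (by rw [hp1]; exact hp1a)]
            exact mul_le_mul_of_nonneg_left h1 (by rw [hp1]; exact hp1a)
          · rw [abs_mul, abs_of_nonneg (by rw [hp1]; linarith)]
            exact mul_le_mul_of_nonneg_left h2 (by rw [hp1]; linarith)
          · exact mul_le_mul h4 h3 (abs_nonneg _) (abs_nonneg _)
      _ = D j + |M w j| * D w := by ring

lemma osc_Aop {f : (Fin n → Bool) → ℝ} {D : Fin n → ℝ}
    (hsymm : M.IsSymm) (hdiag : ∀ i, M i i = 0) (h : OscBd f D) (U : Finset (Fin n)) :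
    OscBd (Aop M θ U f)
      (fun j => ((U.card : ℝ))⁻¹ * ∑ w ∈ U, (if j = w then 0 else D j + |M w j| * D w)) := by
  intro j σ
  unfold Aop
  rw [← mul_sub, ← Finset.sum_sub_distrib, abs_mul,
    abs_of_nonneg (by positivity : (0:ℝ) ≤ ((U.card : ℝ))⁻¹)]
  refine mul_le_mul_of_nonneg_left ?_ (by positivity)
  refine le_trans (Finset.abs_sum_le_sum_abs _ _) ?_
  exact Finset.sum_le_sum fun w _ => osc_Tw M θ hsymm hdiag h w j σ

lemma osc_mono {f : (Fin n → Bool) → ℝ} {D D' : Fin n → ℝ} (h : OscBd f D)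
    (hle : ∀ j, D j ≤ D' j) : OscBd f D' :=
  fun j σ => le_trans (h j σ) (hle j)

lemma osc_apart {f : (Fin n → Bool) → ℝ} {D : Fin n → ℝ} (h : OscBd f D)
    (T : Finset (Fin n)) :
    ∀ (σ τ : Fin n → Bool), (∀ j ∉ T, σ j = τ j) → |f σ - f τ| ≤ ∑ j ∈ T, D j := by
  classical
  induction T using Finset.induction with
  | empty =>
    intro σ τ hag
    have : σ = τ := funext fun j => hag j (Finset.notMem_empty j)
    simp [this]
  | @insert j T hj ih =>
    intro σ τ hag
    set σ' := Function.update σ j (τ j) with hσ'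
    have step1 : |f σ - f σ'| ≤ D j := by
      have : σ = Function.update σ j (σ j) := (Function.update_eq_self j σ).symm
      calc |f σ - f σ'| = |f (Function.update σ j (σ j)) - f (Function.update σ j (τ j))| := by
            rw [← this]
        _ ≤ D j := h.pair j σ _ _
    have step2 : |f σ' - f τ| ≤ ∑ k ∈ T, D k := by
      refine ih σ' τ fun k hk => ?_
      by_cases hkj : k = j
      · subst hkj; rw [hσ', Function.update_self]
      · rw [hσ', Function.update_of_ne hkj]
        exact hag k (by simp [hkj, hk])
    calc |f σ - f τ| ≤ |f σ - f σ'| + |f σ' - f τ| := abs_sub_le _ _ _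
      _ ≤ D j + ∑ k ∈ T, D k := add_le_add step1 step2
      _ = ∑ k ∈ insert j T, D k := (Finset.sum_insert hj).symm

/-- Partition function restricted to configurations agreeing with `y` on `T`. -/
def condZ (T : Finset (Fin n)) (y : Fin n → Bool) : ℝ :=
  ∑ σ ∈ Finset.univ.filter (fun σ => ∀ j ∈ T, σ j = y j), isingWt M θ σ

/-- Unnormalized conditional expectation. -/
def condE (T : Finset (Fin n)) (y : Fin n → Bool) (f : (Fin n → Bool) → ℝ) : ℝ :=
  ∑ σ ∈ Finset.univ.filter (fun σ => ∀ j ∈ T, σ j = y j), isingWt M θ σ * f σ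

lemma condZ_pos (T : Finset (Fin n)) (y : Fin n → Bool) : 0 < condZ M θ T y := by
  refine Finset.sum_pos (fun σ _ => wt_pos M θ σ) ⟨y, ?_⟩
  simp

lemma pair_sum (T : Finset (Fin n)) (y : Fin n → Bool) {w : Fin n} (hw : w ∉ T)
    (g : (Fin n → Bool) → ℝ) :
    ∑ σ ∈ Finset.univ.filter (fun σ => ∀ j ∈ T, σ j = y j), g σ
      = ∑ σ ∈ (Finset.univ.filter (fun σ => ∀ j ∈ T, σ j = y j)).filter
          (fun σ => σ w = true), (g σ + g (Function.update σ w false)) := by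
  classical
  set B := Finset.univ.filter (fun σ : Fin n → Bool => ∀ j ∈ T, σ j = y j) with hB
  rw [← Finset.sum_filter_add_sum_filter_not B (fun σ => σ w = true) g,
    Finset.sum_add_distrib]
  congr 1
  refine Finset.sum_nbij' (i := fun σ => Function.update σ w true)
    (j := fun σ => Function.update σ w false) ?_ ?_ ?_ ?_ ?_
  · intro σ hσ
    simp only [hB, Finset.mem_filter, Finset.mem_univ, true_and] at hσ ⊢
    refine ⟨fun j hj => ?_, ?_⟩
    · rw [Function.update_of_ne (fun h => hw (by rwa [h] at hj)) _ σ]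
      exact hσ.1 j hj
    · simp
  · intro σ hσ
    simp only [hB, Finset.mem_filter, Finset.mem_univ, true_and] at hσ ⊢
    refine ⟨fun j hj => ?_, ?_⟩
    · rw [Function.update_of_ne (fun h => hw (by rwa [h] at hj)) _ σ]
      exact hσ.1 j hj
    · simp
  · intro σ hσ
    simp only [hB, Finset.mem_filter, Finset.mem_univ, true_and] at hσ
    have hf : σ w = false := by simpa using hσ.2
    show Function.update (Function.update σ w true) w false = σ
    rw [Function.update_idem, ← hf, Function.update_eq_self]
  · intro σ hσ
    simp only [hB, Finset.mem_filter, Finset.mem_univ, true_and] at hσ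
    show Function.update (Function.update σ w false) w true = σ
    rw [Function.update_idem, ← hσ.2, Function.update_eq_self]
  · intro σ hσ
    simp only [hB, Finset.mem_filter, Finset.mem_univ, true_and] at hσ
    have hf : σ w = false := by simpa using hσ.2
    show g σ = g (Function.update (Function.update σ w true) w false)
    rw [Function.update_idem, ← hf, Function.update_eq_self]

lemma Tw_weighted (w : Fin n) (f : (Fin n → Bool) → ℝ) (σ : Fin n → Bool) :
    (isingWt M θ (Function.update σ w true) + isingWt M θ (Function.update σ w false))
        * Tw M θ w f σ
      = isingWt M θ (Function.update σ w true) * f (Function.update σ w true)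
        + isingWt M θ (Function.update σ w false) * f (Function.update σ w false) := by
  have h1 := wt_pos M θ (Function.update σ w true)
  have h2 := wt_pos M θ (Function.update σ w false)
  unfold Tw hb
  field_simp
  ring

lemma sum_Tw_invariant (T : Finset (Fin n)) (y : Fin n → Bool) {w : Fin n} (hw : w ∉ T)
    (f : (Fin n → Bool) → ℝ) :
    condE M θ T y (Tw M θ w f) = condE M θ T y f := by
  unfold condE
  rw [pair_sum T y hw (fun σ => isingWt M θ σ * Tw M θ w f σ),
    pair_sum T y hw (fun σ => isingWt M θ σ * f σ)]
  refine Finset.sum_congr rfl fun σ hσ => ?_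
  simp only [Finset.mem_filter] at hσ
  have hσw : σ w = true := hσ.2
  have hσeq : Function.update σ w true = σ := by
    rw [← hσw, Function.update_eq_self]
  have hTw : Tw M θ w f (Function.update σ w false) = Tw M θ w f σ :=
    Tw_update_self M θ w f σ false
  have := Tw_weighted M θ w f σ
  rw [hσeq] at this
  calc isingWt M θ σ * Tw M θ w f σ
        + isingWt M θ (Function.update σ w false) * Tw M θ w f (Function.update σ w false)
      = (isingWt M θ σ + isingWt M θ (Function.update σ w false)) * Tw M θ w f σ := by
        rw [hTw]; ring
    _ = isingWt M θ σ * f σ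
        + isingWt M θ (Function.update σ w false) * f (Function.update σ w false) := this

lemma condE_Aop (T : Finset (Fin n)) (y : Fin n → Bool) (U : Finset (Fin n))
    (hU : ∀ w ∈ U, w ∉ T) (hUne : U.Nonempty) (f : (Fin n → Bool) → ℝ) :
    condE M θ T y (Aop M θ U f) = condE M θ T y f := by
  have hcard : (U.card : ℝ) ≠ 0 := by
    have := Finset.card_pos.mpr hUne
    positivity
  unfold condE Aop
  have step : ∀ σ, isingWt M θ σ * (((U.card : ℝ))⁻¹ * ∑ w ∈ U, Tw M θ w f σ)
      = ((U.card : ℝ))⁻¹ * ∑ w ∈ U, isingWt M θ σ * Tw M θ w f σ := by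
    intro σ
    simp only [Finset.mul_sum]
    exact Finset.sum_congr rfl fun w _ => by ring
  rw [Finset.sum_congr rfl fun σ _ => step σ, ← Finset.mul_sum, Finset.sum_comm]
  have inner : ∀ w ∈ U, (∑ σ ∈ Finset.univ.filter (fun σ => ∀ j ∈ T, σ j = y j),
      isingWt M θ σ * Tw M θ w f σ)
      = ∑ σ ∈ Finset.univ.filter (fun σ => ∀ j ∈ T, σ j = y j), isingWt M θ σ * f σ := by
    intro w hwU
    exact sum_Tw_invariant M θ T y (hU w hwU) f
  rw [Finset.sum_congr rfl inner, Finset.sum_const, nsmul_eq_mul, ← mul_assoc,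
    inv_mul_cancel₀ hcard, one_mul]

lemma condE_Aop_iter (T : Finset (Fin n)) (y : Fin n → Bool) (U : Finset (Fin n))
    (hU : ∀ w ∈ U, w ∉ T) (hUne : U.Nonempty) (f : (Fin n → Bool) → ℝ) (t : ℕ) :
    condE M θ T y ((Aop M θ U)^[t] f) = condE M θ T y f := by
  induction t with
  | zero => rfl
  | succ t ih =>
    rw [Function.iterate_succ_apply', condE_Aop M θ T y U hU hUne, ih]

lemma avg_abs_le (T T' : Finset (Fin n)) (y y' : Fin n → Bool)
    (f : (Fin n → Bool) → ℝ) (K : ℝ)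
    (hK : ∀ σ τ : Fin n → Bool, (∀ j ∈ T, σ j = y j) → (∀ j ∈ T', τ j = y' j) →
      |f σ - f τ| ≤ K) :
    |condE M θ T y f / condZ M θ T y - condE M θ T' y' f / condZ M θ T' y'| ≤ K := by
  have hZ1 := condZ_pos M θ T y
  have hZ2 := condZ_pos M θ T' y'
  rw [div_sub_div _ _ hZ1.ne' hZ2.ne', abs_div,
    abs_of_pos (mul_pos hZ1 hZ2), div_le_iff₀ (mul_pos hZ1 hZ2)]
  unfold condE condZ
  set B1 := Finset.univ.filter (fun σ : Fin n → Bool => ∀ j ∈ T, σ j = y j) with hB1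
  set B2 := Finset.univ.filter (fun σ : Fin n → Bool => ∀ j ∈ T', σ j = y' j) with hB2
  have expand : (∑ σ ∈ B1, isingWt M θ σ * f σ) * ∑ τ ∈ B2, isingWt M θ τ
      - (∑ σ ∈ B1, isingWt M θ σ) * ∑ τ ∈ B2, isingWt M θ τ * f τ
      = ∑ σ ∈ B1, ∑ τ ∈ B2, isingWt M θ σ * isingWt M θ τ * (f σ - f τ) := by
    rw [Finset.sum_mul_sum, Finset.sum_mul_sum, ← Finset.sum_sub_distrib]
    refine Finset.sum_congr rfl fun σ _ => ?_
    rw [← Finset.sum_sub_distrib]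
    refine Finset.sum_congr rfl fun τ _ => ?_
    ring
  rw [expand]
  have last : ∑ σ ∈ B1, ∑ τ ∈ B2, isingWt M θ σ * isingWt M θ τ * K
      = K * ((∑ σ ∈ B1, isingWt M θ σ) * ∑ τ ∈ B2, isingWt M θ τ) := by
    rw [Finset.sum_mul_sum, Finset.mul_sum]
    refine Finset.sum_congr rfl fun σ _ => ?_
    rw [Finset.mul_sum]
    refine Finset.sum_congr rfl fun τ _ => ?_
    ring
  calc |∑ σ ∈ B1, ∑ τ ∈ B2, isingWt M θ σ * isingWt M θ τ * (f σ - f τ)|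
      ≤ ∑ σ ∈ B1, |∑ τ ∈ B2, isingWt M θ σ * isingWt M θ τ * (f σ - f τ)| :=
        Finset.abs_sum_le_sum_abs _ _
    _ ≤ ∑ σ ∈ B1, ∑ τ ∈ B2, |isingWt M θ σ * isingWt M θ τ * (f σ - f τ)| :=
        Finset.sum_le_sum fun σ _ => Finset.abs_sum_le_sum_abs _ _
    _ ≤ ∑ σ ∈ B1, ∑ τ ∈ B2, isingWt M θ σ * isingWt M θ τ * K := by
        refine Finset.sum_le_sum fun σ hσ => Finset.sum_le_sum fun τ hτ => ?_
        rw [abs_mul, abs_of_pos (mul_pos (wt_pos M θ σ) (wt_pos M θ τ))]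
        refine mul_le_mul_of_nonneg_left ?_
          (le_of_lt (mul_pos (wt_pos M θ σ) (wt_pos M θ τ)))
        simp only [hB1, hB2, Finset.mem_filter, Finset.mem_univ, true_and] at hσ hτ
        exact hK σ τ hσ hτ
    _ = K * ((∑ σ ∈ B1, isingWt M θ σ) * ∑ τ ∈ B2, isingWt M θ τ) := last

lemma isingPr_eq (A : (Fin n → Bool) → Prop) :
    isingPr M θ A = (∑ σ ∈ Finset.univ.filter (fun σ => A σ), isingWt M θ σ)
      / ∑ τ : Fin n → Bool, isingWt M θ τ := by
  unfold isingPr isingProb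
  rw [Finset.sum_div]

lemma isingCond_eq_avg (u : Fin n) (T : Finset (Fin n)) (y : Fin n → Bool)
    (B : (Fin n → Bool) → Prop) (hB : ∀ σ, B σ ↔ ∀ j ∈ T, σ j = y j) :
    isingCond M θ (fun σ => σ u = true) B
      = condE M θ T y (fun σ => if σ u then (1:ℝ) else 0) / condZ M θ T y := by
  have hZ : (0:ℝ) < ∑ τ : Fin n → Bool, isingWt M θ τ :=
    Finset.sum_pos (fun τ _ => wt_pos M θ τ) Finset.univ_nonempty
  unfold isingCond
  rw [isingPr_eq, isingPr_eq]
  rw [div_div_div_comm, div_self hZ.ne', div_one]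
  unfold condE condZ
  congr 1
  · rw [Finset.sum_filter, Finset.sum_filter]
    refine Finset.sum_congr rfl fun σ _ => ?_
    by_cases h1 : σ u = true <;> by_cases h2 : ∀ j ∈ T, σ j = y j <;>
      simp [h1, h2, hB σ]
  · rw [Finset.sum_filter, Finset.sum_filter]
    refine Finset.sum_congr rfl fun σ _ => ?_
    by_cases h2 : ∀ j ∈ T, σ j = y j <;> simp [h2, hB σ]

/-- Oscillation-bound vector evolved by the averaged heat-bath recursion. -/
def Evec (M : Matrix (Fin n) (Fin n) ℝ) (m : ℝ) (u : Fin n) : ℕ → Fin n → ℝ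
  | 0 => fun j => if j = u then 1 else 0
  | t+1 => fun j =>
      (1 - 1/m) * Evec M m u t j + (1/m) * ∑ w, |M w j| * Evec M m u t w

/-- Full oscillation bound: `Evec` on free sites, accumulated absorption elsewhere. -/
def Dvec (M : Matrix (Fin n) (Fin n) ℝ) (m : ℝ) (u : Fin n) (U : Finset (Fin n))
    (t : ℕ) (j : Fin n) : ℝ :=
  if j ∈ U then Evec M m u t j
  else (1/m) * ∑ s ∈ Finset.range t, ∑ w, |M w j| * Evec M m u s w

lemma Evec_zero (m : ℝ) (u j : Fin n) : Evec M m u 0 j = if j = u then 1 else 0 := rfl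

lemma Evec_succ (m : ℝ) (u : Fin n) (t : ℕ) (j : Fin n) :
    Evec M m u (t+1) j
      = (1 - 1/m) * Evec M m u t j + (1/m) * ∑ w, |M w j| * Evec M m u t w := rfl

lemma Evec_nonneg (m : ℝ) (hm : 1 ≤ m) (u : Fin n) (t : ℕ) (j : Fin n) :
    0 ≤ Evec M m u t j := by
  induction t generalizing j with
  | zero => by_cases h : j = u <;> simp [Evec, h]
  | succ t ih =>
    have hm0 : (0:ℝ) < m := lt_of_lt_of_le one_pos hm
    have h1 : (0:ℝ) ≤ 1 - 1/m := by
      rw [sub_nonneg, div_le_one hm0]; linarith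
    have h2 : (0:ℝ) ≤ ∑ w, |M w j| * Evec M m u t w :=
      Finset.sum_nonneg fun w _ => mul_nonneg (abs_nonneg _) (ih w)
    rw [Evec_succ]
    have h3 : (0:ℝ) ≤ (1/m) := by positivity
    exact add_nonneg (mul_nonneg h1 (ih j)) (mul_nonneg h3 h2)

lemma Dvec_nonneg (m : ℝ) (hm : 1 ≤ m) (u : Fin n) (U : Finset (Fin n)) (t : ℕ)
    (j : Fin n) : 0 ≤ Dvec M m u U t j := by
  unfold Dvec
  have hm0 : (0:ℝ) < m := lt_of_lt_of_le one_pos hm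
  split
  · exact Evec_nonneg M m hm u t j
  · have : (0:ℝ) ≤ ∑ s ∈ Finset.range t, ∑ w, |M w j| * Evec M m u s w :=
      Finset.sum_nonneg fun s _ => Finset.sum_nonneg fun w _ =>
        mul_nonneg (abs_nonneg _) (Evec_nonneg M m hm u s w)
    positivity

lemma osc_iter (hsymm : M.IsSymm) (hdiag : ∀ i, M i i = 0) (U : Finset (Fin n))
    (u : Fin n) (hu : u ∈ U) {m : ℝ} (hm : m = (U.card : ℝ)) (hm1 : 1 ≤ m) (t : ℕ) :
    OscBd ((Aop M θ U)^[t] (fun σ => if σ u then (1:ℝ) else 0)) (Dvec M m u U t) := by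
  have hm0 : (0:ℝ) < m := lt_of_lt_of_le one_pos hm1
  induction t with
  | zero =>
    intro j σ
    simp only [Function.iterate_zero_apply]
    have hD : Dvec M m u U 0 j = if j = u then 1 else 0 := by
      unfold Dvec
      by_cases hjU : j ∈ U
      · rw [if_pos hjU]
        rfl
      · rw [if_neg hjU]
        have hju : j ≠ u := fun h => hjU (h ▸ hu)
        simp [hju]
    rw [hD]
    by_cases hj : j = u
    · subst hj
      rw [Function.update_self, Function.update_self, if_pos rfl]
      norm_num
    · rw [Function.update_of_ne (Ne.symm hj), Function.update_of_ne (Ne.symm hj)]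
      simp [hj]
  | succ t ih =>
    rw [Function.iterate_succ_apply']
    refine osc_mono (osc_Aop M θ hsymm hdiag ih U) ?_
    intro j
    have hcard : (U.card : ℝ) = m := hm.symm
    by_cases hj : j ∈ U
    · -- free site
      have hsplit : ∑ w ∈ U, (if j = w then 0 else Dvec M m u U t j + |M w j| * Dvec M m u U t w)
          = ∑ w ∈ U.erase j, (Dvec M m u U t j + |M w j| * Dvec M m u U t w) := by
        rw [← Finset.add_sum_erase _ _ hj, if_pos rfl, zero_add]
        refine Finset.sum_congr rfl fun w hw => ?_
        rw [if_neg (Ne.symm (Finset.ne_of_mem_erase hw))]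
      have hDE : ∀ w ∈ U, Dvec M m u U t w = Evec M m u t w := by
        intro w hw; unfold Dvec; rw [if_pos hw]
      have step1 : ∑ w ∈ U.erase j, (Dvec M m u U t j + |M w j| * Dvec M m u U t w)
          ≤ (m - 1) * Evec M m u t j + ∑ w, |M w j| * Evec M m u t w := by
        rw [Finset.sum_add_distrib, Finset.sum_const, nsmul_eq_mul]
        have hc : ((U.erase j).card : ℝ) = m - 1 := by
          rw [Finset.card_erase_of_mem hj, hm]
          have : 1 ≤ U.card := Finset.card_pos.mpr ⟨j, hj⟩
          rw [Nat.cast_sub this, Nat.cast_one]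
        rw [hc, hDE j hj]
        refine add_le_add le_rfl ?_
        refine le_trans (le_of_eq (Finset.sum_congr rfl fun w hw =>
          by rw [hDE w (Finset.mem_of_mem_erase hw)])) ?_
        refine Finset.sum_le_sum_of_subset_of_nonneg (Finset.subset_univ _) ?_
        intro w _ _
        exact mul_nonneg (abs_nonneg _) (Evec_nonneg M m hm1 u t w)
      have hgoal : Dvec M m u U (t+1) j = Evec M m u (t+1) j := by
        unfold Dvec; rw [if_pos hj]
      show ((U.card : ℝ))⁻¹ * ∑ w ∈ U, (if j = w then 0
          else Dvec M m u U t j + |M w j| * Dvec M m u U t w) ≤ Dvec M m u U (t+1) j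
      rw [hgoal, hsplit, hcard, Evec_succ]
      calc m⁻¹ * ∑ w ∈ U.erase j, (Dvec M m u U t j + |M w j| * Dvec M m u U t w)
          ≤ m⁻¹ * ((m - 1) * Evec M m u t j + ∑ w, |M w j| * Evec M m u t w) :=
            mul_le_mul_of_nonneg_left step1 (by positivity)
        _ = (1 - 1/m) * Evec M m u t j + (1/m) * ∑ w, |M w j| * Evec M m u t w := by
            field_simp
            try ring
    · -- conditioned site
      have hDj : Dvec M m u U t j
          = (1/m) * ∑ s ∈ Finset.range t, ∑ w, |M w j| * Evec M m u s w := by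
        unfold Dvec; rw [if_neg hj]
      have hstep : ∑ w ∈ U, (if j = w then 0
            else Dvec M m u U t j + |M w j| * Dvec M m u U t w)
          ≤ ∑ w ∈ U, (Dvec M m u U t j + |M w j| * Evec M m u t w) := by
        refine Finset.sum_le_sum fun w hw => ?_
        have hDE : Dvec M m u U t w = Evec M m u t w := by
          unfold Dvec; rw [if_pos hw]
        rw [hDE]
        split
        · have h1 : 0 ≤ Dvec M m u U t j := Dvec_nonneg M m hm1 u U t j
          have h2 : 0 ≤ |M w j| * Evec M m u t w :=
            mul_nonneg (abs_nonneg _) (Evec_nonneg M m hm1 u t w)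
          linarith
        · exact le_rfl
      show ((U.card : ℝ))⁻¹ * ∑ w ∈ U, (if j = w then 0
          else Dvec M m u U t j + |M w j| * Dvec M m u U t w) ≤ Dvec M m u U (t+1) j
      have htarget : Dvec M m u U (t+1) j = Dvec M m u U t j
          + (1/m) * ∑ w, |M w j| * Evec M m u t w := by
        unfold Dvec
        rw [if_neg hj, if_neg hj, Finset.sum_range_succ, mul_add]
      rw [htarget]
      calc ((U.card : ℝ))⁻¹ * ∑ w ∈ U, (if j = w then 0
            else Dvec M m u U t j + |M w j| * Dvec M m u U t w)
          ≤ m⁻¹ * ∑ w ∈ U, (Dvec M m u U t j + |M w j| * Evec M m u t w) := by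
            rw [hcard]
            exact mul_le_mul_of_nonneg_left hstep (by positivity)
        _ = Dvec M m u U t j + (1/m) * ∑ w ∈ U, |M w j| * Evec M m u t w := by
            rw [Finset.sum_add_distrib, Finset.sum_const, nsmul_eq_mul, hcard]
            field_simp
            try ring
        _ ≤ Dvec M m u U t j + (1/m) * ∑ w, |M w j| * Evec M m u t w := by
            refine add_le_add le_rfl (mul_le_mul_of_nonneg_left ?_ (by positivity))
            refine Finset.sum_le_sum_of_subset_of_nonneg (Finset.subset_univ _) ?_
            intro w _ _
            exact mul_nonneg (abs_nonneg _) (Evec_nonneg M m hm1 u t w)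

lemma Evec_sum_le (m ε : ℝ) (hm1 : 1 ≤ m) (hε0 : 0 ≤ ε)
    (hcol : ∀ j : Fin n, ∑ w, |M w j| ≤ ε) (S' : Finset (Fin n)) (t : ℕ) (j : Fin n) :
    ∑ u ∈ S', Evec M m u t j ≤ (1 - (1-ε)/m)^t := by
  have hm0 : (0:ℝ) < m := lt_of_lt_of_le one_pos hm1
  set κ := 1 - (1-ε)/m with hκ
  have hκ0 : 0 ≤ κ := by
    rw [hκ, sub_nonneg, div_le_one hm0]
    linarith
  induction t generalizing j with
  | zero =>
    simp only [Evec_zero, pow_zero]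
    rw [Finset.sum_ite_eq S' j (fun _ => (1:ℝ))]
    split <;> norm_num
  | succ t ih =>
    have hsum2 : ∑ u ∈ S', ∑ w, |M w j| * Evec M m u t w
        = ∑ w, |M w j| * (∑ u ∈ S', Evec M m u t w) := by
      rw [Finset.sum_comm]
      exact Finset.sum_congr rfl fun w _ => (Finset.mul_sum _ _ _).symm
    have hrw : ∑ u ∈ S', Evec M m u (t+1) j
        = (1 - 1/m) * (∑ u ∈ S', Evec M m u t j)
          + (1/m) * ∑ w, |M w j| * (∑ u ∈ S', Evec M m u t w) := by
      simp only [Evec_succ]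
      rw [Finset.sum_add_distrib, ← Finset.mul_sum, ← Finset.mul_sum, hsum2]
    rw [hrw]
    have h1 : (0:ℝ) ≤ 1 - 1/m := by
      rw [sub_nonneg, div_le_one hm0]; linarith
    have hpow : (0:ℝ) ≤ κ^t := pow_nonneg hκ0 t
    have hb1 : (∑ u ∈ S', Evec M m u t j) ≤ κ^t := ih j
    have hb2 : ∑ w, |M w j| * (∑ u ∈ S', Evec M m u t w) ≤ ε * κ^t := by
      calc ∑ w, |M w j| * (∑ u ∈ S', Evec M m u t w)
          ≤ ∑ w, |M w j| * κ^t :=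
            Finset.sum_le_sum fun w _ =>
              mul_le_mul_of_nonneg_left (ih w) (abs_nonneg _)
        _ = (∑ w, |M w j|) * κ^t := by rw [Finset.sum_mul]
        _ ≤ ε * κ^t := mul_le_mul_of_nonneg_right (hcol j) hpow
    calc (1 - 1/m) * (∑ u ∈ S', Evec M m u t j)
          + (1/m) * ∑ w, |M w j| * (∑ u ∈ S', Evec M m u t w)
        ≤ (1 - 1/m) * κ^t + (1/m) * (ε * κ^t) := by
          refine add_le_add (mul_le_mul_of_nonneg_left hb1 h1) ?_
          exact mul_le_mul_of_nonneg_left hb2 (by positivity)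
      _ = κ^(t+1) := by
          rw [pow_succ, hκ]
          have hm' : m ≠ 0 := ne_of_gt hm0
          field_simp
          try ring

lemma per_u (hsymm : M.IsSymm) (hdiag : ∀ i, M i i = 0)
    (S : Finset (Fin n)) (v : Fin n) (x : Fin n → Bool)
    (u : Fin n) (hu : u ∈ S) (huv : u ≠ v) {m : ℝ}
    (hm : m = (((((S ∪ {v}) \ {u}) : Finset (Fin n))ᶜ).card : ℝ)) (hm1 : 1 ≤ m)
    (t : ℕ) :
    |isingCond M θ (fun σ => σ u = true)
        (fun σ => (∀ w ∈ S, w ≠ v → w ≠ u → σ w = x w) ∧ σ v = true) -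
      isingCond M θ (fun σ => σ u = true)
        (fun σ => (∀ w ∈ S, w ≠ v → w ≠ u → σ w = x w) ∧ σ v = false)|
    ≤ (∑ j, Evec M m u t j)
      + (1/m) * ∑ s ∈ Finset.range t, ∑ w, |M w v| * Evec M m u s w := by
  classical
  set T : Finset (Fin n) := (S ∪ {v}) \ {u} with hT
  set U : Finset (Fin n) := Tᶜ with hU
  have hvT : v ∈ T := by
    rw [hT, Finset.mem_sdiff]
    exact ⟨Finset.mem_union_right _ (Finset.mem_singleton_self v),
      by simp [Ne.symm huv]⟩
  have huU : u ∈ U := by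
    rw [hU, Finset.mem_compl, hT, Finset.mem_sdiff]
    intro h
    exact h.2 (Finset.mem_singleton_self u)
  have hvU : v ∉ U := by
    rw [hU, Finset.mem_compl]
    exact fun h => h hvT
  have hUT : ∀ w ∈ U, w ∉ T := fun w hw => Finset.mem_compl.mp hw
  have hUne : U.Nonempty := ⟨u, huU⟩
  have hBiff : ∀ (s : Bool) (σ : Fin n → Bool),
      ((∀ w ∈ S, w ≠ v → w ≠ u → σ w = x w) ∧ σ v = s)
        ↔ ∀ j ∈ T, σ j = Function.update x v s j := by
    intro s σ
    constructor
    · rintro ⟨h1, h2⟩ j hj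
      rw [hT, Finset.mem_sdiff] at hj
      have hju : j ≠ u := by
        intro h; exact hj.2 (h ▸ Finset.mem_singleton_self u)
      by_cases hjv : j = v
      · subst hjv; rw [Function.update_self]; exact h2
      · rw [Function.update_of_ne hjv]
        have hjS : j ∈ S := by
          rcases Finset.mem_union.mp hj.1 with h | h
          · exact h
          · exact absurd (Finset.mem_singleton.mp h) hjv
        exact h1 j hjS hjv hju
    · intro h
      constructor
      · intro w hwS hwv hwu
        have hwT : w ∈ T := by
          rw [hT, Finset.mem_sdiff]
          exact ⟨Finset.mem_union_left _ hwS, by simp [hwu]⟩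
        rw [h w hwT, Function.update_of_ne hwv]
      · rw [h v hvT, Function.update_self]
  set f : (Fin n → Bool) → ℝ := fun σ => if σ u then (1:ℝ) else 0 with hf
  set g := (Aop M θ U)^[t] f with hg
  rw [isingCond_eq_avg M θ u T (Function.update x v true) _ (hBiff true),
    isingCond_eq_avg M θ u T (Function.update x v false) _ (hBiff false)]
  rw [show condE M θ T (Function.update x v true) f
      = condE M θ T (Function.update x v true) g from
      (condE_Aop_iter M θ T _ U hUT hUne f t).symm,
    show condE M θ T (Function.update x v false) f
      = condE M θ T (Function.update x v false) g from
      (condE_Aop_iter M θ T _ U hUT hUne f t).symm]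
  have hosc : OscBd g (Dvec M m u U t) := by
    rw [hg, hf]
    exact osc_iter M θ hsymm hdiag U u huU (by rw [hm, hU, hT]) hm1 t
  refine le_trans (avg_abs_le M θ T T _ _ g
    (∑ j ∈ insert v U, Dvec M m u U t j) ?_) ?_
  · intro σ τ h1 h2
    refine osc_apart hosc (insert v U) σ τ fun j hj => ?_
    have hjv : j ≠ v := fun h => hj (h ▸ Finset.mem_insert_self v U)
    have hjU : j ∉ U := fun h => hj (Finset.mem_insert_of_mem h)
    have hjT : j ∈ T := by
      by_contra h
      exact hjU (Finset.mem_compl.mpr h)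
    rw [h1 j hjT, h2 j hjT, Function.update_of_ne hjv, Function.update_of_ne hjv]
  · rw [Finset.sum_insert hvU]
    have hDv : Dvec M m u U t v
        = (1/m) * ∑ s ∈ Finset.range t, ∑ w, |M w v| * Evec M m u s w := by
      unfold Dvec; rw [if_neg hvU]
    have hDU : ∑ j ∈ U, Dvec M m u U t j = ∑ j ∈ U, Evec M m u t j := by
      refine Finset.sum_congr rfl fun j hj => ?_
      unfold Dvec; rw [if_pos hj]
    rw [hDv, hDU]
    have : ∑ j ∈ U, Evec M m u t j ≤ ∑ j, Evec M m u t j := by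
      refine Finset.sum_le_sum_of_subset_of_nonneg (Finset.subset_univ _) ?_
      intro j _ _
      exact Evec_nonneg M m hm1 u t j
    linarith

end Stmt2Aux

open Stmt2Aux in

/-- The total influence of a vertex `v` on the vertices of `S` (conditioned on
the remaining values in `S`) is at most `bd/(1-bd)` in the high-temperature regime. -/
theorem stmt2 {n : ℕ} (b : ℝ) (d : ℕ) (hb : 0 < b) (hd : 0 < d) (hn : 0 < n)
    (hbd : b * d < 1)
    (M : Matrix (Fin n) (Fin n) ℝ) (θ : Fin n → ℝ)
    (hsymm : M.IsSymm) (hdiag : ∀ i, M i i = 0)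
    (hbound : ∀ i j, |M i j| ≤ b)
    (hsparse : ∀ i, (Finset.univ.filter (fun j => M i j ≠ 0)).card ≤ d)
    (S : Finset (Fin n)) (v : Fin n) (x : Fin n → Bool) :
    ∑ u ∈ S.filter (fun u => u ≠ v),
        |isingCond M θ (fun σ => σ u = true)
            (fun σ => (∀ w ∈ S, w ≠ v → w ≠ u → σ w = x w) ∧ σ v = true) -
          isingCond M θ (fun σ => σ u = true)
            (fun σ => (∀ w ∈ S, w ≠ v → w ≠ u → σ w = x w) ∧ σ v = false)|
      ≤ b * d / (1 - b * d) := by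
  classical
  have hdR : (0:ℝ) < d := Nat.cast_pos.mpr hd
  set ε : ℝ := b * d with hε
  have hε0 : 0 < ε := mul_pos hb hdR
  have hε1 : ε < 1 := hbd
  have hsymm' : ∀ i j, M i j = M j i := fun i j => hsymm.apply j i
  have hcol : ∀ j : Fin n, ∑ w, |M w j| ≤ ε := by
    intro j
    calc ∑ w, |M w j| = ∑ w, |M j w| := Finset.sum_congr rfl fun w _ => by
          rw [hsymm' w j]
      _ = ∑ w ∈ Finset.univ.filter (fun w => M j w ≠ 0), |M j w| := by
          rw [Finset.sum_filter]
          refine Finset.sum_congr rfl fun w _ => ?_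
          by_cases h : M j w = 0 <;> simp [h]
      _ ≤ ∑ w ∈ Finset.univ.filter (fun w => M j w ≠ 0), b :=
          Finset.sum_le_sum fun w _ => hbound j w
      _ = ((Finset.univ.filter (fun w => M j w ≠ 0)).card : ℝ) * b := by
          rw [Finset.sum_const, nsmul_eq_mul]
      _ ≤ (d:ℝ) * b := by
          refine mul_le_mul_of_nonneg_right ?_ (le_of_lt hb)
          exact_mod_cast hsparse j
      _ = ε := by rw [hε]; ring
  set c : ℕ := (S ∪ {v}).card with hc
  have hc1 : 1 ≤ c :=
    Finset.card_pos.mpr ⟨v, Finset.mem_union_right _ (Finset.mem_singleton_self v)⟩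
  have hcn : c ≤ n := by
    rw [hc]
    simpa using Finset.card_le_univ (S ∪ {v})
  set m0 : ℕ := n - (c - 1) with hm0def
  set m : ℝ := (m0 : ℝ) with hmdef
  have hm0ge : 1 ≤ m0 := by omega
  have hm1 : 1 ≤ m := by rw [hmdef]; exact_mod_cast hm0ge
  have hmpos : (0:ℝ) < m := lt_of_lt_of_le one_pos hm1
  set S' : Finset (Fin n) := S.filter (fun u => u ≠ v) with hS'
  have hUcard : ∀ u ∈ S', m = (((((S ∪ {v}) \ {u}) : Finset (Fin n))ᶜ).card : ℝ) := by
    intro u hu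
    rw [hS', Finset.mem_filter] at hu
    have huSv : u ∈ S ∪ {v} := Finset.mem_union_left _ hu.1
    have hsub : ({u} : Finset (Fin n)) ⊆ S ∪ {v} := Finset.singleton_subset_iff.mpr huSv
    have hTcard : ((S ∪ {v}) \ {u}).card = c - 1 := by
      rw [Finset.card_sdiff_of_subset hsub, Finset.card_singleton, hc]
    rw [Finset.card_compl, hTcard, Fintype.card_fin, hmdef, hm0def]
  set κ : ℝ := 1 - (1-ε)/m with hκdef
  have hκ0 : 0 ≤ κ := by
    rw [hκdef, sub_nonneg, div_le_one hmpos]; linarith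
  have hκ1 : κ < 1 := by
    rw [hκdef]
    have : 0 < (1-ε)/m := div_pos (by linarith) hmpos
    linarith
  set F : Fin n → ℝ := fun u =>
    |isingCond M θ (fun σ => σ u = true)
        (fun σ => (∀ w ∈ S, w ≠ v → w ≠ u → σ w = x w) ∧ σ v = true) -
      isingCond M θ (fun σ => σ u = true)
        (fun σ => (∀ w ∈ S, w ≠ v → w ≠ u → σ w = x w) ∧ σ v = false)| with hF
  have key : ∀ t : ℕ, ∑ u ∈ S', F u ≤ ε/(1-ε) + n * κ^t := by
    intro t
    have hper : ∀ u ∈ S', F u ≤ (∑ j, Evec M m u t j)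
        + (1/m) * ∑ s ∈ Finset.range t, ∑ w, |M w v| * Evec M m u s w := by
      intro u hu
      have hm' := hUcard u hu
      rw [hS', Finset.mem_filter] at hu
      exact per_u M θ hsymm hdiag S v x u hu.1 hu.2 hm' hm1 t
    refine le_trans (Finset.sum_le_sum hper) ?_
    rw [Finset.sum_add_distrib]
    have hA : ∑ u ∈ S', ∑ j, Evec M m u t j ≤ (n:ℝ) * κ^t := by
      rw [Finset.sum_comm]
      calc ∑ j : Fin n, ∑ u ∈ S', Evec M m u t j ≤ ∑ _j : Fin n, κ^t :=
            Finset.sum_le_sum fun j _ =>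
              Evec_sum_le M m ε hm1 (le_of_lt hε0) hcol S' t j
        _ = (n:ℝ) * κ^t := by
            rw [Finset.sum_const, Finset.card_univ, Fintype.card_fin, nsmul_eq_mul]
    have hgeom : ∑ s ∈ Finset.range t, κ^s ≤ 1/(1-κ) := by
      rw [geom_sum_eq (ne_of_lt hκ1) t,
        show κ^t - 1 = -(1 - κ^t) by ring, show κ - 1 = -(1-κ) by ring,
        neg_div_neg_eq]
      refine (div_le_div_iff_of_pos_right (by linarith : (0:ℝ) < 1-κ)).mpr ?_
      have := pow_nonneg hκ0 t
      linarith
    have hB : ∑ u ∈ S', (1/m) * ∑ s ∈ Finset.range t, ∑ w, |M w v| * Evec M m u s w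
        ≤ ε/(1-ε) := by
      rw [← Finset.mul_sum]
      have hswap : ∑ u ∈ S', ∑ s ∈ Finset.range t, ∑ w, |M w v| * Evec M m u s w
          = ∑ s ∈ Finset.range t, ∑ w, |M w v| * (∑ u ∈ S', Evec M m u s w) := by
        rw [Finset.sum_comm]
        refine Finset.sum_congr rfl fun s _ => ?_
        rw [Finset.sum_comm]
        exact Finset.sum_congr rfl fun w _ => (Finset.mul_sum _ _ _).symm
      rw [hswap]
      have hinner : ∀ s ∈ Finset.range t,
          ∑ w, |M w v| * (∑ u ∈ S', Evec M m u s w) ≤ ε * κ^s := by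
        intro s _
        calc ∑ w, |M w v| * (∑ u ∈ S', Evec M m u s w)
            ≤ ∑ w, |M w v| * κ^s := Finset.sum_le_sum fun w _ =>
              mul_le_mul_of_nonneg_left
                (Evec_sum_le M m ε hm1 (le_of_lt hε0) hcol S' s w) (abs_nonneg _)
          _ = (∑ w, |M w v|) * κ^s := by rw [Finset.sum_mul]
          _ ≤ ε * κ^s := mul_le_mul_of_nonneg_right (hcol v) (pow_nonneg hκ0 s)
      calc (1/m) * ∑ s ∈ Finset.range t, ∑ w, |M w v| * (∑ u ∈ S', Evec M m u s w)
          ≤ (1/m) * ∑ s ∈ Finset.range t, ε * κ^s :=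
            mul_le_mul_of_nonneg_left (Finset.sum_le_sum hinner) (by positivity)
        _ = (ε/m) * ∑ s ∈ Finset.range t, κ^s := by
            rw [Finset.mul_sum, Finset.mul_sum]
            exact Finset.sum_congr rfl fun s _ => by ring
        _ ≤ (ε/m) * (1/(1-κ)) :=
            mul_le_mul_of_nonneg_left hgeom (by positivity)
        _ = ε/(1-ε) := by
            rw [hκdef]
            have h1 : (1:ℝ) - ε ≠ 0 := by linarith
            have h2 : m ≠ 0 := ne_of_gt hmpos
            have h3 : (1:ℝ) - (1 - (1-ε)/m) = (1-ε)/m := by ring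
            rw [h3, one_div_div, div_mul_div_comm, mul_comm ε m, mul_div_mul_left _ _ h2]
    linarith [hA, hB]
  have htend : Filter.Tendsto (fun t : ℕ => ε/(1-ε) + n * κ^t) Filter.atTop
      (nhds (ε/(1-ε) + n * 0)) :=
    Filter.Tendsto.add tendsto_const_nhds
      ((tendsto_pow_atTop_nhds_zero_of_lt_one hκ0 hκ1).const_mul _)
  have hfinal : ∑ u ∈ S', F u ≤ ε/(1-ε) + n * 0 := ge_of_tendsto' htend key
  simpa using hfinal
end
end
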